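/- arXiv:2408.08606 — 12 statements merged into one kernel-verified Lean document; each statement's English description precedes it below -/
import Mathlib

section
/- Let a and b be linearly independent idempotents of A satisfying a·b = ρ·a + ξ·b and b·a = ξ'·a + ρ'·b for scalars ρ, ξ, ξ', ρ' ∈ F. Then (a·b)·a = a·(b·a) if and only if ρ(1 − ρ') = ξ'(1 − ξ). -/
/-- Let `a` and `b` be linearly independent idempotents of `A` satisfying
`a·b = ρ·a + ξ·b` and `b·a = ξ'·a + ρ'·b`.  Then `(a·b)·a = a·(b·a)` if and
only if `ρ(1 − ρ') = ξ'(1 − ξ)`. -/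
theorem stmt_0 {F A : Type*} [Field F] [NonUnitalNonAssocRing A] [Module F A]
    [SMulCommClass F A A] [IsScalarTower F A A]
    (hchar : (2 : F) ≠ 0)
    (a b : A) (hindep : LinearIndependent F ![a, b])
    (ha : a * a = a) (hb : b * b = b)
    (ρ ξ ξ' ρ' : F)
    (hab : a * b = ρ • a + ξ • b) (hba : b * a = ξ' • a + ρ' • b) :
    (a * b) * a = a * (b * a) ↔ ρ * (1 - ρ') = ξ' * (1 - ξ) := by
  have key : (a * b) * a - a * (b * a) = (ρ + ξ * ξ' - (ξ' + ρ' * ρ)) • a := by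
    rw [hab, hba, add_mul, mul_add, smul_mul_assoc, smul_mul_assoc,
      mul_smul_comm, mul_smul_comm, ha, hab, hba]
    module
  rw [Fintype.linearIndependent_iff] at hindep
  constructor
  · intro h
    have h0 : (ρ + ξ * ξ' - (ξ' + ρ' * ρ)) • a = 0 := by
      rw [← key, h, sub_self]
    have := hindep ![ρ + ξ * ξ' - (ξ' + ρ' * ρ), 0]
      (by simpa [Fin.sum_univ_two] using h0) 0
    simp only [Matrix.cons_val_zero] at this
    linear_combination this
  · intro h
    have h0 : (ρ + ξ * ξ' - (ξ' + ρ' * ρ)) = 0 := by linear_combination h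
    have := key
    rw [h0, zero_smul, sub_eq_zero] at this
    exact this
end

section
/- Let ρ, ξ, ξ', ρ' be elements of a field F. Then the two equations ρ(1 − ρ') = ξ'(1 − ξ) and ρ'(1 − ρ) = ξ(1 − ξ') hold simultaneously if and only if either (ρ = ξ' and ρ' = ξ) or (ρ + ξ = 1 and ρ' + ξ' = 1). -/
/-- Let `ρ, ξ, ξ', ρ'` be elements of a field `F`.  Then the two equations
`ρ(1 − ρ') = ξ'(1 − ξ)` and `ρ'(1 − ρ) = ξ(1 − ξ')` hold simultaneously if and
only if either (`ρ = ξ'` and `ρ' = ξ`) or (`ρ + ξ = 1` and `ρ' + ξ' = 1`). -/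
theorem stmt_1 {F : Type*} [Field F] (ρ ξ ξ' ρ' : F) :
    (ρ * (1 - ρ') = ξ' * (1 - ξ) ∧ ρ' * (1 - ρ) = ξ * (1 - ξ')) ↔
      ((ρ = ξ' ∧ ρ' = ξ) ∨ (ρ + ξ = 1 ∧ ρ' + ξ' = 1)) := by
  constructor
  · rintro ⟨h1, h2⟩
    have hb : ρ - ξ' = ρ' - ξ := by linear_combination h1 - h2
    have key : (ρ - ξ') * (ρ + ξ - 1) = 0 := by
      linear_combination -h1 + ρ * hb
    rcases mul_eq_zero.mp key with h | h
    · exact Or.inl ⟨by linear_combination h, by linear_combination h - hb⟩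
    · exact Or.inr ⟨by linear_combination h, by linear_combination h - hb⟩
  · rintro (⟨h1, h2⟩ | ⟨h1, h2⟩)
    · subst_vars; exact ⟨rfl, rfl⟩
    · exact ⟨by linear_combination (1 - ρ') * h1 + ξ * h2 - h2,
             by linear_combination (1 - ρ') * h1 + ξ * h2 - h1⟩
end

section
/- Let a and b be linearly independent idempotents of A satisfying a·b = b·a = ρ·a + ξ·b for scalars ρ, ξ ∈ F. Then the element v := ρ·a + (ξ − 1)·b satisfies a·v = v·a = ξ·v, and v·v ∈ F·a if and only if (ξ − 1)·((ξ − 1) + 2ρξ) = 0. -/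
/-- Let `a` and `b` be linearly independent idempotents of `A` satisfying
`a·b = b·a = ρ·a + ξ·b`.  Then the element `v := ρ·a + (ξ − 1)·b` satisfies
`a·v = v·a = ξ·v`, and `v·v ∈ F·a` if and only if
`(ξ − 1)·((ξ − 1) + 2ρξ) = 0`. -/
theorem stmt_2 {F A : Type*} [Field F] [NonUnitalNonAssocRing A] [Module F A]
    [SMulCommClass F A A] [IsScalarTower F A A]
    (hchar : (2 : F) ≠ 0)
    (a b : A) (hindep : LinearIndependent F ![a, b])
    (ha : a * a = a) (hb : b * b = b)
    (ρ ξ : F)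
    (hab : a * b = ρ • a + ξ • b) (hba : b * a = ρ • a + ξ • b)
    (v : A) (hv : v = ρ • a + (ξ - 1) • b) :
    a * v = ξ • v ∧ v * a = ξ • v ∧
      (v * v ∈ Submodule.span F {a} ↔ (ξ - 1) * ((ξ - 1) + 2 * ρ * ξ) = 0) := by
  have hpair := LinearIndependent.pair_iff.mp hindep
  subst hv
  have hvv : (ρ • a + (ξ - 1) • b) * (ρ • a + (ξ - 1) • b) =
      (ρ * ρ + 2 * ρ * ρ * (ξ - 1)) • a + ((ξ - 1) * ((ξ - 1) + 2 * ρ * ξ)) • b := by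
    simp only [mul_add, add_mul, smul_mul_assoc, mul_smul_comm, ha, hb, hab, hba]
    module
  refine ⟨?_, ?_, ?_⟩
  · simp only [mul_add, mul_smul_comm, ha, hab]
    module
  · simp only [add_mul, smul_mul_assoc, ha, hba]
    module
  · rw [hvv]
    constructor
    · intro h
      rw [Submodule.mem_span_singleton] at h
      obtain ⟨c, hc⟩ := h
      have h0 : (ρ * ρ + 2 * ρ * ρ * (ξ - 1) - c) • a +
          ((ξ - 1) * ((ξ - 1) + 2 * ρ * ξ)) • b = 0 := by
        rw [sub_smul, hc]
        abel
      exact (hpair _ _ h0).2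
    · intro h
      rw [h, zero_smul, add_zero]
      exact Submodule.smul_mem _ _ (Submodule.mem_span_singleton_self a)
end

section
/- Let a and b be idempotents of A satisfying a·b = ρ·a + ξ·b and b·a = ξ'·a + ρ'·b for scalars ρ, ξ, ξ', ρ' ∈ F with ρ + ξ = 1 and ρ' + ξ' = 1. Then: (1) a·(b − a) = ξ·(b − a) and (b − a)·a = ρ'·(b − a); (2) (b − a)·(b − a) = (ξ' − ξ)·(b − a); (3) if ξ ≠ ξ', then the element (ξ' − ξ)⁻¹·(b − a) is an idempotent. -/
/-- Let `a` and `b` be idempotents of `A` satisfying `a·b = ρ·a + ξ·b` and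
`b·a = ξ'·a + ρ'·b` with `ρ + ξ = 1` and `ρ' + ξ' = 1`.  Then:
(1) `a·(b − a) = ξ·(b − a)` and `(b − a)·a = ρ'·(b − a)`;
(2) `(b − a)·(b − a) = (ξ' − ξ)·(b − a)`;
(3) if `ξ ≠ ξ'`, then `(ξ' − ξ)⁻¹·(b − a)` is an idempotent. -/
theorem stmt_3 {F A : Type*} [Field F] [NonUnitalNonAssocRing A] [Module F A]
    [SMulCommClass F A A] [IsScalarTower F A A]
    (hchar : (2 : F) ≠ 0)
    (a b : A) (ha : a * a = a) (hb : b * b = b)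
    (ρ ξ ξ' ρ' : F)
    (hab : a * b = ρ • a + ξ • b) (hba : b * a = ξ' • a + ρ' • b)
    (h1 : ρ + ξ = 1) (h2 : ρ' + ξ' = 1) :
    (a * (b - a) = ξ • (b - a) ∧ (b - a) * a = ρ' • (b - a)) ∧
    (b - a) * (b - a) = (ξ' - ξ) • (b - a) ∧
    (ξ ≠ ξ' →
      ((ξ' - ξ)⁻¹ • (b - a)) * ((ξ' - ξ)⁻¹ • (b - a)) = (ξ' - ξ)⁻¹ • (b - a)) := by
  have hρ : ρ = 1 - ξ := by linear_combination h1
  have hρ' : ρ' = 1 - ξ' := by linear_combination h2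
  subst hρ hρ'
  have e1 : a * (b - a) = ξ • (b - a) := by
    rw [mul_sub, hab, ha]; module
  have e2 : (b - a) * a = (1 - ξ') • (b - a) := by
    rw [sub_mul, hba, ha]; module
  have e3 : (b - a) * (b - a) = (ξ' - ξ) • (b - a) := by
    rw [sub_mul, mul_sub, mul_sub, hab, hba, ha, hb]; module
  refine ⟨⟨e1, e2⟩, e3, fun hne => ?_⟩
  have hc : ξ' - ξ ≠ 0 := sub_ne_zero.mpr (Ne.symm hne)
  rw [smul_mul_assoc, mul_smul_comm, e3, smul_smul, smul_smul]
  congr 1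
  field_simp
end

section
/- Let a and b be idempotents of A satisfying a·b = ρ·a + ξ·b and b·a = ξ'·a + ρ'·b for scalars ρ, ξ, ξ', ρ' ∈ F with ξ' + ρ = 1 and ρ' + ξ = 1. Then for every β ∈ F with β ≠ −1, the element (1 + β)⁻¹·(a + β·b) is an idempotent. -/
/-- Let `a` and `b` be idempotents of `A` satisfying `a·b = ρ·a + ξ·b` and
`b·a = ξ'·a + ρ'·b` with `ξ' + ρ = 1` and `ρ' + ξ = 1`.  Then for every `β ≠ −1`,
the element `(1 + β)⁻¹·(a + β·b)` is an idempotent. -/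
theorem stmt_4 {F A : Type*} [Field F] [NonUnitalNonAssocRing A] [Module F A]
    [SMulCommClass F A A] [IsScalarTower F A A]
    (hchar : (2 : F) ≠ 0)
    (a b : A) (ha : a * a = a) (hb : b * b = b)
    (ρ ξ ξ' ρ' : F)
    (hab : a * b = ρ • a + ξ • b) (hba : b * a = ξ' • a + ρ' • b)
    (h1 : ξ' + ρ = 1) (h2 : ρ' + ξ = 1) :
    ∀ β : F, β ≠ -1 →
      ((1 + β)⁻¹ • (a + β • b)) * ((1 + β)⁻¹ • (a + β • b)) =
        (1 + β)⁻¹ • (a + β • b) := by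
  intro β hβ
  have hβ1 : (1 + β) ≠ 0 := by
    intro h; exact hβ (by linear_combination h)
  have key : (a + β • b) * (a + β • b) = (1 + β) • (a + β • b) := by
    simp only [add_mul, mul_add, smul_mul_assoc, mul_smul_comm, ha, hb, hab, hba]
    have hρ : ξ' = 1 - ρ := by linear_combination h1
    have hρ' : ρ' = 1 - ξ := by linear_combination h2
    subst hρ hρ'
    module
  rw [smul_mul_smul_comm, key, smul_smul]
  congr 1
  field_simp
end

section
/- Let B : A × A → F be a symmetric bilinear form that is Frobenius, i.e., B(x·y, z) = B(x, y·z) for all x, y, z ∈ A, let a ∈ A be an idempotent, and let z ∈ A satisfy a·z = μ·z and z·a = ν·z for scalars μ, ν ∈ F with (μ, ν) ≠ (1, 1). Then B(a, z) = 0. -/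
/-- Let `B` be a symmetric Frobenius bilinear form on `A`, `a` an idempotent,
and `z` an element with `a·z = μ·z`, `z·a = ν·z` and `(μ, ν) ≠ (1, 1)`.
Then `B(a, z) = 0`. -/
theorem stmt_5 {F A : Type*} [Field F] [NonUnitalNonAssocRing A] [Module F A]
    [SMulCommClass F A A] [IsScalarTower F A A]
    (hchar : (2 : F) ≠ 0)
    (B : A →ₗ[F] A →ₗ[F] F)
    (hsymm : ∀ x y : A, B x y = B y x)
    (hfrob : ∀ x y z : A, B (x * y) z = B x (y * z))
    (a : A) (ha : a * a = a)
    (z : A) (μ ν : F) (hz1 : a * z = μ • z) (hz2 : z * a = ν • z)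
    (hμν : (μ, ν) ≠ ((1 : F), (1 : F))) :
    B a z = 0 := by
  have h1 : B a z = μ * B a z := by
    conv_lhs => rw [← ha, hfrob, hz1]
    simp
  have h2 : B a z = ν * B a z := by
    conv_lhs => rw [hsymm, ← ha, ← hfrob, hz2]
    simp [hsymm z a]
  have hor : μ ≠ 1 ∨ ν ≠ 1 := by
    by_contra h
    push_neg at h
    exact hμν (Prod.ext h.1 h.2)
  rcases hor with h | h
  · have h3 : (1 - μ) * B a z = 0 := by linear_combination h1
    exact (mul_eq_zero.mp h3).resolve_left (sub_ne_zero.mpr (Ne.symm h))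
  · have h3 : (1 - ν) * B a z = 0 := by linear_combination h2
    exact (mul_eq_zero.mp h3).resolve_left (sub_ne_zero.mpr (Ne.symm h))
end

section
/- Let a ∈ A be an idempotent, let (μ₁,ν₁), …, (μ_n,ν_n) be pairwise distinct pairs in F×F, none equal to (0,0) or to (1,1), and suppose y = y₁ + y₀ + Σ_{i=1}^n y_i where a·y₁ = y₁·a = y₁, a·y₀ = y₀·a = 0, and a·y_i = μ_i·y_i, y_i·a = ν_i·y_i for each i. Then y₁, y₀, and each y_i belong to the non-unital subalgebra of A generated by {a, y} (the smallest subspace of A containing a and y and closed under multiplication). -/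
theorem key_sep {F A : Type*} [Field F] [NonUnitalNonAssocRing A] [Module F A]
    [SMulCommClass F A A] [IsScalarTower F A A]
    (a : A) {ι : Type*} [Fintype ι] [DecidableEq ι]
    (p : ι → F × F) (hp : Function.Injective p)
    (v : ι → A)
    (hv1 : ∀ j, a * v j = (p j).1 • v j)
    (hv2 : ∀ j, v j * a = (p j).2 • v j)
    (M : Submodule F A) (hM : ∀ u ∈ M, ∀ w ∈ M, u * w ∈ M)
    (haM : a ∈ M) (hsum : (∑ j, v j) ∈ M) :
    ∀ j, v j ∈ M := by
  classical
  set f : ι → F := fun j => (p j).1 with hf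
  set g : ι → F := fun j => (p j).2 with hg
  have step_f : ∀ c : ι → F, (∑ j, c j • v j) ∈ M → (∑ j, (f j * c j) • v j) ∈ M := by
    intro c hc
    have h := hM a haM _ hc
    rw [Finset.mul_sum] at h
    have : ∀ j : ι, a * (c j • v j) = (f j * c j) • v j := by
      intro j
      rw [mul_smul_comm, hv1, smul_smul, mul_comm]
    rwa [Finset.sum_congr rfl (fun j _ => this j)] at h
  have step_g : ∀ c : ι → F, (∑ j, c j • v j) ∈ M → (∑ j, (g j * c j) • v j) ∈ M := by
    intro c hc
    have h := hM _ hc a haM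
    rw [Finset.sum_mul] at h
    have : ∀ j : ι, (c j • v j) * a = (g j * c j) • v j := by
      intro j
      rw [smul_mul_assoc, hv2, smul_smul, mul_comm]
    rwa [Finset.sum_congr rfl (fun j _ => this j)] at h
  have step_aff : ∀ (α β γ : F) (c : ι → F), (∑ j, c j • v j) ∈ M →
      (∑ j, ((α + β * f j + γ * g j) * c j) • v j) ∈ M := by
    intro α β γ c hc
    have : ∀ j : ι, ((α + β * f j + γ * g j) * c j) • v j
        = α • (c j • v j) + β • ((f j * c j) • v j) + γ • ((g j * c j) • v j) := by
      intro j
      rw [smul_smul, smul_smul, smul_smul]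
      module
    rw [Finset.sum_congr rfl (fun j _ => this j)]
    rw [Finset.sum_add_distrib, Finset.sum_add_distrib, ← Finset.smul_sum,
      ← Finset.smul_sum, ← Finset.smul_sum]
    exact M.add_mem (M.add_mem (M.smul_mem _ hc) (M.smul_mem _ (step_f c hc)))
      (M.smul_mem _ (step_g c hc))
  have claim : ∀ s : Finset ι, ∀ w : ι → ι → F,
      (∀ k ∈ s, ∃ α β γ : F, ∀ l, w k l = α + β * f l + γ * g l) →
      (∑ j, (∏ k ∈ s, w k j) • v j) ∈ M := by
    intro s
    induction s using Finset.induction with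
    | empty =>
      intro w _
      simpa using hsum
    | insert _ _ hk ih =>
      rename_i k s
      intro w hw
      obtain ⟨α, β, γ, hαβγ⟩ := hw k (Finset.mem_insert_self k s)
      have h1 : (∑ j, (∏ m ∈ s, w m j) • v j) ∈ M :=
        ih w (fun m hm => hw m (Finset.mem_insert_of_mem hm))
      have h2 := step_aff α β γ _ h1
      have : ∀ j : ι, (∏ m ∈ insert k s, w m j) • v j
          = ((α + β * f j + γ * g j) * (∏ m ∈ s, w m j)) • v j := by
        intro j
        rw [Finset.prod_insert hk, hαβγ j]
      rwa [Finset.sum_congr rfl (fun j _ => this j)]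
  intro j
  set w : ι → ι → F := fun k l =>
    if f k = f j then (g j - g k)⁻¹ * (g l - g k) else (f j - f k)⁻¹ * (f l - f k) with hw
  have hwform : ∀ k ∈ Finset.univ.erase j, ∃ α β γ : F, ∀ l, w k l = α + β * f l + γ * g l := by
    intro k _
    by_cases h : f k = f j
    · exact ⟨(g j - g k)⁻¹ * (-(g k)), 0, (g j - g k)⁻¹, fun l => by simp [hw, h]; ring⟩
    · exact ⟨(f j - f k)⁻¹ * (-(f k)), (f j - f k)⁻¹, 0, fun l => by simp [hw, h]; ring⟩
  have hmem := claim (Finset.univ.erase j) w hwform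
  have hwj : ∀ k, k ≠ j → w k j = 1 := by
    intro k hk
    by_cases h : f k = f j
    · have hg' : g k ≠ g j := by
        intro hgkj
        exact hk (hp (Prod.ext h hgkj))
      simp only [hw, if_pos h]
      exact inv_mul_cancel₀ (sub_ne_zero.mpr (Ne.symm hg'))
    · simp only [hw, if_neg h]
      exact inv_mul_cancel₀ (sub_ne_zero.mpr fun e => h e.symm)
  have hwk : ∀ k, w k k = 0 := by
    intro k
    by_cases h : f k = f j <;> simp [hw, h]
  have : (∑ l, (∏ k ∈ Finset.univ.erase j, w k l) • v l) = v j := by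
    rw [Finset.sum_eq_single j]
    · rw [Finset.prod_eq_one (fun k hk => hwj k (Finset.ne_of_mem_erase hk)), one_smul]
    · intro l _ hl
      rw [Finset.prod_eq_zero (f := fun k => w k l) (Finset.mem_erase.mpr ⟨hl, Finset.mem_univ l⟩) (hwk l), zero_smul]
    · intro h; exact absurd (Finset.mem_univ j) h
  rwa [this] at hmem

/-- Let `a` be an idempotent, `(μ₁,ν₁), …, (μ_n,ν_n)` pairwise distinct pairs,
none equal to `(0,0)` or `(1,1)`, and `y = y₁ + y₀ + Σ yᵢ` with
`a·y₁ = y₁·a = y₁`, `a·y₀ = y₀·a = 0`, `a·yᵢ = μᵢ·yᵢ`, `yᵢ·a = νᵢ·yᵢ`.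
Then `y₁`, `y₀` and each `yᵢ` belong to the non-unital subalgebra generated by
`{a, y}`, i.e. to every subspace of `A` containing `a` and `y` that is closed
under multiplication. -/
theorem stmt_9 {F A : Type*} [Field F] [NonUnitalNonAssocRing A] [Module F A]
    [SMulCommClass F A A] [IsScalarTower F A A]
    (hchar : (2 : F) ≠ 0)
    (a : A) (ha : a * a = a)
    (n : ℕ) (μ ν : Fin n → F)
    (hdist : Function.Injective (fun i => (μ i, ν i)))
    (h00 : ∀ i, (μ i, ν i) ≠ ((0 : F), (0 : F)))
    (h11 : ∀ i, (μ i, ν i) ≠ ((1 : F), (1 : F)))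
    (y y₁ y₀ : A) (yi : Fin n → A)
    (hy₁ : a * y₁ = y₁ ∧ y₁ * a = y₁)
    (hy₀ : a * y₀ = 0 ∧ y₀ * a = 0)
    (hyi : ∀ i, a * yi i = μ i • yi i ∧ yi i * a = ν i • yi i)
    (hy : y = y₁ + y₀ + ∑ i, yi i) :
    ∀ M : Submodule F A, (∀ u ∈ M, ∀ v ∈ M, u * v ∈ M) → a ∈ M → y ∈ M →
      y₁ ∈ M ∧ y₀ ∈ M ∧ ∀ i, yi i ∈ M := by

  intro M hM haM hyM
  classical
  set p : Fin n ⊕ Bool → F × F := fun j =>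
    Sum.rec (fun i => (μ i, ν i)) (fun b => if b then (1, 1) else (0, 0)) j with hp'
  set v : Fin n ⊕ Bool → A := fun j =>
    Sum.rec (fun i => yi i) (fun b => if b then y₁ else y₀) j with hv'
  have hp : Function.Injective p := by
    rintro (i | b) (i' | b') h
    · exact congrArg Sum.inl (hdist h)
    · exfalso; cases b' with
      | false => exact h00 i h
      | true => exact h11 i h
    · exfalso; cases b with
      | false => exact h00 i' h.symm
      | true => exact h11 i' h.symm
    · cases b <;> cases b' <;> simp [hp'] at h ⊢
  have hv1 : ∀ j, a * v j = (p j).1 • v j := by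
    rintro (i | b)
    · exact (hyi i).1
    · cases b <;> simp [hp', hv', hy₀.1, hy₁.1]
  have hv2 : ∀ j, v j * a = (p j).2 • v j := by
    rintro (i | b)
    · exact (hyi i).2
    · cases b <;> simp [hp', hv', hy₀.2, hy₁.2]
  have hsum : (∑ j, v j) ∈ M := by
    have : (∑ j, v j) = y := by
      rw [Fintype.sum_sum_type, Fintype.sum_bool, hy]
      simp only [hv', if_true, if_false]
      abel
    rwa [this]
  have hkey := key_sep a p hp v hv1 hv2 M hM haM hsum
  exact ⟨hkey (Sum.inr true), hkey (Sum.inr false), fun i => hkey (Sum.inl i)⟩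
end

section
/- (b·a)·b = b·(a·b) holds if and only if both Σ_{(μ,ν)∈S} (μ − ν)·(b_{μ,ν}·b_{μ,ν}) = 0 and, for every (μ,ν) ∈ S, ν·(b_{μ,ν}·b₀) − μ·(b₀·b_{μ,ν}) = α(μ + ν − 1)(μ − ν)·b_{μ,ν}. -/
/-- The `(μ, ν)` paired eigenspace of an element `e` of a (not necessarily
associative, commutative or unital) `F`-algebra `A`. -/
def eigSp (F : Type*) {A : Type*} [Field F] [NonUnitalNonAssocRing A] [Module F A]
    [SMulCommClass F A A] [IsScalarTower F A A] (e : A) (μ ν : F) : Submodule F A where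
  carrier := {x | e * x = μ • x ∧ x * e = ν • x}
  add_mem' := by
    rintro x y ⟨hx1, hx2⟩ ⟨hy1, hy2⟩
    exact ⟨by rw [mul_add, hx1, hy1, smul_add], by rw [add_mul, hx2, hy2, smul_add]⟩
  zero_mem' := ⟨by rw [mul_zero, smul_zero], by rw [zero_mul, smul_zero]⟩
  smul_mem' := by
    rintro c x ⟨hx1, hx2⟩
    exact ⟨by rw [mul_smul_comm, hx1, smul_comm], by rw [smul_mul_assoc, hx2, smul_comm]⟩

/-- The family of submodules exhibiting `A` as a direct sum: a distinguished
submodule `E₁` (playing the role of the `(1,1)`-eigenspace), the zero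
eigenspace of `a`, and the `(μ, ν)` eigenspaces of `a` for `(μ, ν) ∈ S`. -/
def axisFam (F : Type*) {A : Type*} [Field F] [NonUnitalNonAssocRing A] [Module F A]
    [SMulCommClass F A A] [IsScalarTower F A A] (a : A) (E₁ : Submodule F A)
    (S : Finset (F × F)) : Option (Option {p : F × F // p ∈ S}) → Submodule F A
  | none => E₁
  | some none => eigSp F a 0 0
  | some (some p) => eigSp F a p.1.1 p.1.2

theorem indep_sum_eq_zero' {F M ι : Type*} [Field F] [AddCommGroup M] [Module F M] [Fintype ι]
    {f : ι → Submodule F M} (hf : iSupIndep f) (x : ι → M) (hx : ∀ i, x i ∈ f i)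
    (hsum : ∑ i, x i = 0) (i : ι) : x i = 0 := by
  classical
  have h := Finset.add_sum_erase Finset.univ x (Finset.mem_univ i)
  rw [hsum] at h
  have h1 : x i = -∑ j ∈ Finset.univ.erase i, x j := eq_neg_of_add_eq_zero_left h
  have h2 : x i ∈ ⨆ j ≠ i, f j := by
    rw [h1]
    refine Submodule.neg_mem _ (Submodule.sum_mem _ fun j hj => ?_)
    exact Submodule.mem_iSup_of_mem j
      (Submodule.mem_iSup_of_mem (Finset.mem_erase.mp hj).1 (hx j))
  exact Submodule.disjoint_def.mp (hf i) _ (hx i) h2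

/-- `(b·a)·b = b·(a·b)` holds if and only if both
`Σ_{(μ,ν)∈S} (μ − ν)·b_{μ,ν}² = 0` and, for every `(μ,ν) ∈ S`,
`ν·(b_{μ,ν}·b₀) − μ·(b₀·b_{μ,ν}) = α(μ + ν − 1)(μ − ν)·b_{μ,ν}`. -/
theorem stmt_10 {F A : Type*} [Field F] [NonUnitalNonAssocRing A] [Module F A]
    [SMulCommClass F A A] [IsScalarTower F A A]
    (hchar : (2 : F) ≠ 0)
    -- `a` is an idempotent and a weakly primitive `S`-axis:
    (a : A) (ha : a * a = a)
    (S : Finset (F × F)) (hS0 : ((0 : F), (0 : F)) ∉ S) (hS1 : ((1 : F), (1 : F)) ∉ S)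
    (hindep : iSupIndep (axisFam F a (Submodule.span F {a}) S))
    (hsup : (⨆ i, axisFam F a (Submodule.span F {a}) S i) = ⊤)
    (hwp : eigSp F a 1 1 = Submodule.span F {a})
    -- the fusion rules for `a`:
    (fus1 : ∀ p ∈ S, ∀ q ∈ S, p ≠ q →
      ∀ x ∈ eigSp F a p.1 p.2, ∀ y ∈ eigSp F a q.1 q.2, x * y = 0)
    (fus2 : ∀ p ∈ S, ∀ x ∈ eigSp F a p.1 p.2, ∀ y ∈ eigSp F a p.1 p.2,
      x * y ∈ Submodule.span F {a} ⊔ eigSp F a 0 0)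
    (fus3 : ∀ x ∈ Submodule.span F {a} ⊔ eigSp F a 0 0,
      ∀ y ∈ Submodule.span F {a} ⊔ eigSp F a 0 0,
      x * y ∈ Submodule.span F {a} ⊔ eigSp F a 0 0)
    (fus4 : ∀ p ∈ S, ∀ x ∈ Submodule.span F {a} ⊔ eigSp F a 0 0, ∀ y ∈ eigSp F a p.1 p.2,
      x * y ∈ eigSp F a p.1 p.2 ∧ y * x ∈ eigSp F a p.1 p.2)
    -- `b` is an idempotent, decomposed along the eigenspaces of `a`:
    (b : A) (hb : b * b = b)
    (α : F) (b₀ : A) (hb₀ : b₀ ∈ eigSp F a 0 0)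
    (bc : F × F → A) (hbc : ∀ p ∈ S, bc p ∈ eigSp F a p.1 p.2)
    (hbdecomp : b = α • a + b₀ + ∑ p ∈ S, bc p)
    :
    (b * a) * b = b * (a * b) ↔
      ((∑ p ∈ S, (p.1 - p.2) • (bc p * bc p)) = 0 ∧
        ∀ p ∈ S, p.2 • (bc p * b₀) - p.1 • (b₀ * bc p) =
          (α * (p.1 + p.2 - 1) * (p.1 - p.2)) • bc p) := by
  classical
  have hb₀a : b₀ * a = 0 := by rw [hb₀.2, zero_smul]
  have hab₀ : a * b₀ = 0 := by rw [hb₀.1, zero_smul]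
  have hba : b * a = α • a + ∑ p ∈ S, p.2 • bc p := by
    rw [hbdecomp, add_mul, add_mul, smul_mul_assoc, ha, hb₀a, add_zero, Finset.sum_mul]
    congr 1
    exact Finset.sum_congr rfl fun p hp => (hbc p hp).2
  have hab : a * b = α • a + ∑ p ∈ S, p.1 • bc p := by
    rw [hbdecomp, mul_add, mul_add, mul_smul_comm, ha, hab₀, add_zero, Finset.mul_sum]
    congr 1
    exact Finset.sum_congr rfl fun p hp => (hbc p hp).1
  have hdiagL : ∀ p ∈ S, ∑ q ∈ S, bc p * bc q = bc p * bc p := fun p hp =>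
    Finset.sum_eq_single p
      (fun q hq hne => fus1 p hp q hq (Ne.symm hne) _ (hbc p hp) _ (hbc q hq))
      (fun h => absurd hp h)
  have hdiagR : ∀ p ∈ S, ∑ q ∈ S, bc q * bc p = bc p * bc p := fun p hp =>
    Finset.sum_eq_single p
      (fun q hq hne => fus1 q hq p hp hne _ (hbc q hq) _ (hbc p hp))
      (fun h => absurd hp h)
  have hbcb : ∀ p ∈ S, bc p * b = (α * p.2) • bc p + bc p * b₀ + bc p * bc p := by
    intro p hp
    rw [hbdecomp, mul_add, mul_add, mul_smul_comm, (hbc p hp).2, smul_smul,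
      Finset.mul_sum, hdiagL p hp]
  have hbbc : ∀ p ∈ S, b * bc p = (α * p.1) • bc p + b₀ * bc p + bc p * bc p := by
    intro p hp
    rw [hbdecomp, add_mul, add_mul, smul_mul_assoc, (hbc p hp).1, smul_smul,
      Finset.sum_mul, hdiagR p hp]
  have hLHS : (b * a) * b = (α * α) • a + ((∑ p ∈ S, (α * p.1) • bc p) +
      ∑ p ∈ S, p.2 • ((α * p.2) • bc p + bc p * b₀ + bc p * bc p)) := by
    rw [hba, add_mul, smul_mul_assoc, hab, smul_add, smul_smul, Finset.smul_sum,
      Finset.sum_mul, add_assoc]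
    congr 1
    congr 1
    · exact Finset.sum_congr rfl fun p _ => smul_smul α p.1 (bc p)
    · exact Finset.sum_congr rfl fun p hp => by rw [smul_mul_assoc, hbcb p hp]
  have hRHS : b * (a * b) = (α * α) • a + ((∑ p ∈ S, (α * p.2) • bc p) +
      ∑ p ∈ S, p.1 • ((α * p.1) • bc p + b₀ * bc p + bc p * bc p)) := by
    rw [hab, mul_add, mul_smul_comm, hba, smul_add, smul_smul, Finset.smul_sum,
      Finset.mul_sum, add_assoc]
    congr 1
    congr 1
    · exact Finset.sum_congr rfl fun p _ => smul_smul α p.2 (bc p)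
    · exact Finset.sum_congr rfl fun p hp => by rw [mul_smul_comm, hbbc p hp]
  have hD : (b * a) * b - b * (a * b) =
      (∑ p ∈ S, (p.2 • (bc p * b₀) - p.1 • (b₀ * bc p) -
        (α * (p.1 + p.2 - 1) * (p.1 - p.2)) • bc p)) +
      ∑ p ∈ S, (p.2 - p.1) • (bc p * bc p) := by
    rw [hLHS, hRHS, add_sub_add_left_eq_sub, ← Finset.sum_add_distrib,
      ← Finset.sum_add_distrib, ← Finset.sum_sub_distrib, ← Finset.sum_add_distrib]
    exact Finset.sum_congr rfl fun p hp => by module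
  have hneg : ∑ p ∈ S, (p.2 - p.1) • (bc p * bc p) =
      -∑ p ∈ S, (p.1 - p.2) • (bc p * bc p) := by
    rw [← Finset.sum_neg_distrib]
    exact Finset.sum_congr rfl fun p _ => by rw [← neg_smul, neg_sub]
  have hxtmem : ∀ p ∈ S, p.2 • (bc p * b₀) - p.1 • (b₀ * bc p) -
      (α * (p.1 + p.2 - 1) * (p.1 - p.2)) • bc p ∈ eigSp F a p.1 p.2 := by
    intro p hp
    obtain ⟨h4a, h4b⟩ := fus4 p hp b₀ (Submodule.mem_sup_right hb₀) (bc p) (hbc p hp)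
    exact Submodule.sub_mem _ (Submodule.sub_mem _ (Submodule.smul_mem _ _ h4b)
      (Submodule.smul_mem _ _ h4a)) (Submodule.smul_mem _ _ (hbc p hp))
  rw [← sub_eq_zero, hD]
  constructor
  · intro h
    have hY : (∑ p ∈ S, (p.2 - p.1) • (bc p * bc p)) ∈
        Submodule.span F {a} ⊔ eigSp F a 0 0 :=
      Submodule.sum_mem _ fun p hp =>
        Submodule.smul_mem _ _ (fus2 p hp _ (hbc p hp) _ (hbc p hp))
    obtain ⟨ys, hys, yt, hyt, hY'⟩ := Submodule.mem_sup.mp hY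
    set g : Option (Option {p : F × F // p ∈ S}) → A := fun i =>
      match i with
      | none => ys
      | some none => yt
      | some (some q) => q.1.2 • (bc q.1 * b₀) - q.1.1 • (b₀ * bc q.1) -
          (α * (q.1.1 + q.1.2 - 1) * (q.1.1 - q.1.2)) • bc q.1 with hg
    have hmem : ∀ i, g i ∈ axisFam F a (Submodule.span F {a}) S i := by
      rintro (_ | _ | q)
      · exact hys
      · exact hyt
      · exact hxtmem q.1 q.2
    have hgsum : ∑ i, g i = 0 := by
      rw [Fintype.sum_option, Fintype.sum_option]
      show ys + (yt + ∑ q : {p : F × F // p ∈ S},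
        (q.1.2 • (bc q.1 * b₀) - q.1.1 • (b₀ * bc q.1) -
          (α * (q.1.1 + q.1.2 - 1) * (q.1.1 - q.1.2)) • bc q.1)) = 0
      rw [Finset.sum_coe_sort S (fun p => p.2 • (bc p * b₀) - p.1 • (b₀ * bc p) -
        (α * (p.1 + p.2 - 1) * (p.1 - p.2)) • bc p)]
      have : ys + (yt + (∑ p ∈ S, (p.2 • (bc p * b₀) - p.1 • (b₀ * bc p) -
          (α * (p.1 + p.2 - 1) * (p.1 - p.2)) • bc p))) =
          (∑ p ∈ S, (p.2 • (bc p * b₀) - p.1 • (b₀ * bc p) -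
          (α * (p.1 + p.2 - 1) * (p.1 - p.2)) • bc p)) + (ys + yt) := by abel
      rw [this, hY']
      exact h
    have hz := indep_sum_eq_zero' hindep g hmem hgsum
    have hys0 : ys = 0 := hz none
    have hyt0 : yt = 0 := hz (some none)
    have hY0 : ∑ p ∈ S, (p.2 - p.1) • (bc p * bc p) = 0 := by
      rw [← hY', hys0, hyt0, add_zero]
    constructor
    · rw [hneg] at hY0
      exact neg_eq_zero.mp hY0
    · intro p hp
      exact sub_eq_zero.mp (hz (some (some ⟨p, hp⟩)))
  · rintro ⟨h1, h2⟩
    have hz : ∀ p ∈ S, p.2 • (bc p * b₀) - p.1 • (b₀ * bc p) -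
        (α * (p.1 + p.2 - 1) * (p.1 - p.2)) • bc p = 0 := fun p hp =>
      sub_eq_zero.mpr (h2 p hp)
    rw [Finset.sum_eq_zero hz, zero_add, hneg, h1, neg_zero]
end

section
/- Assume (b·a)·b = b·(a·b), and let (μ,ν) ∈ S with ε := μ + ν ≠ 0. Then b·b_{μ,ν} = (((1 − α)ν + αμ)/ε)·b_{μ,ν} + b_{μ,ν}·b_{μ,ν} and b_{μ,ν}·b = (((1 − α)μ + αν)/ε)·b_{μ,ν} + b_{μ,ν}·b_{μ,ν}. Consequently, the two equations b·b_{μ,ν} = (((1 − α)ν + αμ)/ε)·b_{μ,ν} and b_{μ,ν}·b = (((1 − α)μ + αν)/ε)·b_{μ,ν} hold if and only if b_{μ,ν}·b_{μ,ν} = 0. -/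
/-- Assume `(b·a)·b = b·(a·b)`, and let `(μ,ν) ∈ S` with `ε := μ + ν ≠ 0`.  Then
`b·b_{μ,ν} = (((1 − α)ν + αμ)/ε)·b_{μ,ν} + b_{μ,ν}²` and
`b_{μ,ν}·b = (((1 − α)μ + αν)/ε)·b_{μ,ν} + b_{μ,ν}²`.  Consequently, `b_{μ,ν}`
is a `(((1 − α)ν + αμ)/ε, ((1 − α)μ + αν)/ε)`-eigenvector of `b` if and only if
`b_{μ,ν}² = 0`. -/
theorem stmt_12 {F A : Type*} [Field F] [NonUnitalNonAssocRing A] [Module F A]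
    [SMulCommClass F A A] [IsScalarTower F A A]
    (hchar : (2 : F) ≠ 0)
    -- `a` is an idempotent and a weakly primitive `S`-axis:
    (a : A) (ha : a * a = a)
    (S : Finset (F × F)) (hS0 : ((0 : F), (0 : F)) ∉ S) (hS1 : ((1 : F), (1 : F)) ∉ S)
    (hindep : iSupIndep (axisFam F a (Submodule.span F {a}) S))
    (hsup : (⨆ i, axisFam F a (Submodule.span F {a}) S i) = ⊤)
    (hwp : eigSp F a 1 1 = Submodule.span F {a})
    -- the fusion rules for `a`:
    (fus1 : ∀ p ∈ S, ∀ q ∈ S, p ≠ q →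
      ∀ x ∈ eigSp F a p.1 p.2, ∀ y ∈ eigSp F a q.1 q.2, x * y = 0)
    (fus2 : ∀ p ∈ S, ∀ x ∈ eigSp F a p.1 p.2, ∀ y ∈ eigSp F a p.1 p.2,
      x * y ∈ Submodule.span F {a} ⊔ eigSp F a 0 0)
    (fus3 : ∀ x ∈ Submodule.span F {a} ⊔ eigSp F a 0 0,
      ∀ y ∈ Submodule.span F {a} ⊔ eigSp F a 0 0,
      x * y ∈ Submodule.span F {a} ⊔ eigSp F a 0 0)
    (fus4 : ∀ p ∈ S, ∀ x ∈ Submodule.span F {a} ⊔ eigSp F a 0 0, ∀ y ∈ eigSp F a p.1 p.2,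
      x * y ∈ eigSp F a p.1 p.2 ∧ y * x ∈ eigSp F a p.1 p.2)
    -- `b` is an idempotent, decomposed along the eigenspaces of `a`:
    (b : A) (hb : b * b = b)
    (α : F) (b₀ : A) (hb₀ : b₀ ∈ eigSp F a 0 0)
    (bc : F × F → A) (hbc : ∀ p ∈ S, bc p ∈ eigSp F a p.1 p.2)
    (hbdecomp : b = α • a + b₀ + ∑ p ∈ S, bc p)
    (hcomm : (b * a) * b = b * (a * b))
    (μ ν : F) (hμν : (μ, ν) ∈ S) (hε : μ + ν ≠ 0) :
    b * bc (μ, ν) =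
        (((1 - α) * ν + α * μ) / (μ + ν)) • bc (μ, ν) + bc (μ, ν) * bc (μ, ν) ∧
    bc (μ, ν) * b =
        (((1 - α) * μ + α * ν) / (μ + ν)) • bc (μ, ν) + bc (μ, ν) * bc (μ, ν) ∧
    ((b * bc (μ, ν) = (((1 - α) * ν + α * μ) / (μ + ν)) • bc (μ, ν) ∧
        bc (μ, ν) * b = (((1 - α) * μ + α * ν) / (μ + ν)) • bc (μ, ν)) ↔
      bc (μ, ν) * bc (μ, ν) = 0) := by
  classical
  have mem_eig : ∀ (μ' ν' : F) (x : A), x ∈ eigSp F a μ' ν' ↔ a * x = μ' • x ∧ x * a = ν' • x :=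
    fun _ _ _ => Iff.rfl
  set E : Submodule F A := Submodule.span F {a} ⊔ eigSp F a 0 0 with hE
  set c : A := bc (μ, ν) with hcdef
  have hc : c ∈ eigSp F a μ ν := hbc (μ, ν) hμν
  set w : A := α • a + b₀ with hwdef
  have hwE : w ∈ E := add_mem
    (Submodule.mem_sup_left (Submodule.smul_mem _ _ (Submodule.mem_span_singleton_self a)))
    (Submodule.mem_sup_right hb₀)
  set s : A := ∑ p ∈ S.erase (μ, ν), bc p with hsdef
  set i₀ : Option (Option {p : F × F // p ∈ S}) := some (some ⟨(μ, ν), hμν⟩) with hi₀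
  set R : Submodule F A := ⨆ (j) (_ : j ≠ i₀), axisFam F a (Submodule.span F {a}) S j with hR
  -- membership facts into R
  have hER : E ≤ R := by
    apply sup_le
    · exact le_iSup₂ (f := fun j (_ : j ≠ i₀) => axisFam F a (Submodule.span F {a}) S j)
        none (by simp [hi₀])
    · exact le_iSup₂ (f := fun j (_ : j ≠ i₀) => axisFam F a (Submodule.span F {a}) S j)
        (some none) (by simp [hi₀])
  have heigR : ∀ p ∈ S.erase (μ, ν), eigSp F a p.1 p.2 ≤ R := by
    intro p hp
    have hpS : p ∈ S := Finset.mem_of_mem_erase hp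
    have hne : p ≠ (μ, ν) := Finset.ne_of_mem_erase hp
    exact le_iSup₂ (f := fun j (_ : j ≠ i₀) => axisFam F a (Submodule.span F {a}) S j)
      (some (some ⟨p, hpS⟩))
      (by simp only [hi₀, ne_eq, Option.some.injEq, Subtype.mk.injEq]; exact hne)
  -- the key projection lemma
  have hzero : ∀ X Y : A, X ∈ eigSp F a μ ν → Y ∈ R → X + Y = 0 → X = 0 := by
    intro X Y hX hY hXY
    have hXi : X ∈ axisFam F a (Submodule.span F {a}) S i₀ := hX
    have hXR : X ∈ R := by
      have : X = -Y := eq_neg_of_add_eq_zero_left hXY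
      rw [this]; exact neg_mem hY
    exact Submodule.disjoint_def.mp (hindep i₀) X hXi hXR
  -- basic product identities
  have hac : a * c = μ • c := hc.1
  have hca : c * a = ν • c := hc.2
  have hwa : w * a = α • a := by
    rw [hwdef, add_mul, smul_mul_assoc, ha, hb₀.2, zero_smul, add_zero]
  have haw : a * w = α • a := by
    rw [hwdef, mul_add, mul_smul_comm, ha, hb₀.1, zero_smul, add_zero]
  have hbsum : b = w + c + s := by
    rw [hbdecomp, hwdef, hcdef, hsdef, ← Finset.add_sum_erase S bc hμν]
    abel
  have hcs : c * s = 0 := by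
    rw [hsdef, Finset.mul_sum]
    refine Finset.sum_eq_zero fun q hq => ?_
    exact fus1 (μ, ν) hμν q (Finset.mem_of_mem_erase hq) (Finset.ne_of_mem_erase hq).symm
      c hc (bc q) (hbc q (Finset.mem_of_mem_erase hq))
  have hsc : s * c = 0 := by
    rw [hsdef, Finset.sum_mul]
    refine Finset.sum_eq_zero fun q hq => ?_
    exact fus1 q (Finset.mem_of_mem_erase hq) (μ, ν) hμν (Finset.ne_of_mem_erase hq)
      (bc q) (hbc q (Finset.mem_of_mem_erase hq)) c hc
  have hccE : c * c ∈ E := fus2 (μ, ν) hμν c hc c hc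
  -- products of the various bc's
  have hbcbc : ∀ p ∈ S.erase (μ, ν), ∀ q ∈ S.erase (μ, ν), bc p * bc q ∈ R := by
    intro p hp q hq
    have hpS := Finset.mem_of_mem_erase hp
    have hqS := Finset.mem_of_mem_erase hq
    by_cases hpq : p = q
    · subst hpq
      exact hER (fus2 p hpS (bc p) (hbc p hpS) (bc p) (hbc p hpS))
    · rw [fus1 p hpS q hqS hpq (bc p) (hbc p hpS) (bc q) (hbc q hqS)]
      exact zero_mem R
  have hsR : s ∈ R := by
    rw [hsdef]
    exact Submodule.sum_mem _ fun p hp => heigR p hp (hbc p (Finset.mem_of_mem_erase hp))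
  have hwsR : w * s ∈ R := by
    rw [hsdef, Finset.mul_sum]
    refine Submodule.sum_mem _ fun p hp => ?_
    exact heigR p hp
      (fus4 p (Finset.mem_of_mem_erase hp) w hwE (bc p) (hbc p (Finset.mem_of_mem_erase hp))).1
  have hswR : s * w ∈ R := by
    rw [hsdef, Finset.sum_mul]
    refine Submodule.sum_mem _ fun p hp => ?_
    exact heigR p hp
      (fus4 p (Finset.mem_of_mem_erase hp) w hwE (bc p) (hbc p (Finset.mem_of_mem_erase hp))).2
  have hssR : s * s ∈ R := by
    rw [hsdef, Finset.sum_mul_sum]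
    exact Submodule.sum_mem _ fun p hp => Submodule.sum_mem _ fun q hq => hbcbc p hp q hq
  -- first projection: from b * b = b
  have hX1 : w * c + c * w - c = 0 := by
    refine hzero _ (w * w + w * s + s * w + s * s + c * c - w - s) ?_ ?_ ?_
    · exact sub_mem (add_mem (fus4 (μ, ν) hμν w hwE c hc).1 (fus4 (μ, ν) hμν w hwE c hc).2) hc
    · refine sub_mem (sub_mem (add_mem (add_mem (add_mem (add_mem ?_ hwsR) hswR) hssR)
        (hER hccE)) (hER hwE)) hsR
      exact hER (fus3 w hwE w hwE)
    · have hzero' : b * b - b = 0 := by rw [hb, sub_self]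
      rw [← hzero']
      rw [hbsum]
      simp only [add_mul, mul_add]
      rw [hcs, hsc]
      abel
  -- expansions of b * a and a * b
  set t₁ : A := ∑ p ∈ S.erase (μ, ν), p.1 • bc p with ht₁
  set t₂ : A := ∑ p ∈ S.erase (μ, ν), p.2 • bc p with ht₂
  have h1 : b * a = α • a + ν • c + t₂ := by
    rw [hbsum, add_mul, add_mul, hwa, hca, ht₂, hsdef, Finset.sum_mul]
    congr 1
    exact Finset.sum_congr rfl fun p hp => (hbc p (Finset.mem_of_mem_erase hp)).2
  have h2 : a * b = α • a + μ • c + t₁ := by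
    rw [hbsum, mul_add, mul_add, haw, hac, ht₁, hsdef, Finset.mul_sum]
    congr 1
    exact Finset.sum_congr rfl fun p hp => (hbc p (Finset.mem_of_mem_erase hp)).1
  have h3 : c * b = c * w + c * c := by
    rw [hbsum, mul_add, mul_add, hcs, add_zero]
  have h4 : b * c = w * c + c * c := by
    rw [hbsum, add_mul, add_mul, hsc, add_zero]
  have ht₁R : t₁ ∈ R := Submodule.sum_mem _ fun p hp =>
    Submodule.smul_mem _ _ (heigR p hp (hbc p (Finset.mem_of_mem_erase hp)))
  have ht₂R : t₂ ∈ R := Submodule.sum_mem _ fun p hp =>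
    Submodule.smul_mem _ _ (heigR p hp (hbc p (Finset.mem_of_mem_erase hp)))
  have hbcb : ∀ p ∈ S.erase (μ, ν), bc p * b ∈ R := by
    intro p hp
    have hpS := Finset.mem_of_mem_erase hp
    rw [hbsum, mul_add, mul_add]
    refine add_mem (add_mem ?_ ?_) ?_
    · exact heigR p hp (fus4 p hpS w hwE (bc p) (hbc p hpS)).2
    · rw [fus1 p hpS (μ, ν) hμν (Finset.ne_of_mem_erase hp) (bc p) (hbc p hpS) c hc]
      exact zero_mem R
    · rw [hsdef, Finset.mul_sum]
      exact Submodule.sum_mem _ fun q hq => hbcbc p hp q hq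
  have hbbc : ∀ p ∈ S.erase (μ, ν), b * bc p ∈ R := by
    intro p hp
    have hpS := Finset.mem_of_mem_erase hp
    rw [hbsum, add_mul, add_mul]
    refine add_mem (add_mem ?_ ?_) ?_
    · exact heigR p hp (fus4 p hpS w hwE (bc p) (hbc p hpS)).1
    · rw [fus1 (μ, ν) hμν p hpS (Finset.ne_of_mem_erase hp).symm c hc (bc p) (hbc p hpS)]
      exact zero_mem R
    · rw [hsdef, Finset.sum_mul]
      exact Submodule.sum_mem _ fun q hq => hbcbc q hq p hp
  have ht₂bR : t₂ * b ∈ R := by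
    rw [ht₂, Finset.sum_mul]
    refine Submodule.sum_mem _ fun p hp => ?_
    rw [smul_mul_assoc]
    exact Submodule.smul_mem _ _ (hbcb p hp)
  have hbt₁R : b * t₁ ∈ R := by
    rw [ht₁, Finset.mul_sum]
    refine Submodule.sum_mem _ fun p hp => ?_
    rw [mul_smul_comm]
    exact Submodule.smul_mem _ _ (hbbc p hp)
  -- second projection: from (b*a)*b = b*(a*b)
  have hX2 : (α * (μ - ν)) • c + ν • (c * w) - μ • (w * c) = 0 := by
    refine hzero _ (α • t₁ - α • t₂ + (ν - μ) • (c * c) + t₂ * b - b * t₁) ?_ ?_ ?_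
    · refine sub_mem (add_mem (Submodule.smul_mem _ _ hc) (Submodule.smul_mem _ _
        (fus4 (μ, ν) hμν w hwE c hc).2)) (Submodule.smul_mem _ _ (fus4 (μ, ν) hμν w hwE c hc).1)
    · exact sub_mem (add_mem (add_mem (sub_mem (Submodule.smul_mem _ _ ht₁R)
        (Submodule.smul_mem _ _ ht₂R)) (Submodule.smul_mem _ _ (hER hccE))) ht₂bR) hbt₁R
    · have hzero' : (b * a) * b - b * (a * b) = 0 := by rw [hcomm, sub_self]
      rw [← hzero', h1, h2]
      simp only [add_mul, mul_add, smul_mul_assoc, mul_smul_comm]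
      rw [h1, h2, h3, h4]
      module
  -- solve for w*c and c*w
  have hwc : w * c = (((1 - α) * ν + α * μ) / (μ + ν)) • c := by
    have key : (μ + ν) • (w * c) = (ν + α * μ - α * ν) • c := by
      have h : (μ + ν) • (w * c) - (ν + α * μ - α * ν) • c =
          ν • (w * c + c * w - c) - ((α * (μ - ν)) • c + ν • (c * w) - μ • (w * c)) := by
        module
      rw [hX1, hX2, smul_zero, sub_zero] at h
      exact sub_eq_zero.mp h
    have : w * c = (μ + ν)⁻¹ • ((ν + α * μ - α * ν) • c) := by
      rw [← key, inv_smul_smul₀ hε]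
    rw [this, smul_smul]
    congr 1
    field_simp
    ring
  have hcw : c * w = (((1 - α) * μ + α * ν) / (μ + ν)) • c := by
    have key : (μ + ν) • (c * w) = (μ - α * μ + α * ν) • c := by
      have h : (μ + ν) • (c * w) - (μ - α * μ + α * ν) • c =
          μ • (w * c + c * w - c) + ((α * (μ - ν)) • c + ν • (c * w) - μ • (w * c)) := by
        module
      rw [hX1, hX2, smul_zero, add_zero] at h
      exact sub_eq_zero.mp h
    have : c * w = (μ + ν)⁻¹ • ((μ - α * μ + α * ν) • c) := by
      rw [← key, inv_smul_smul₀ hε]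
    rw [this, smul_smul]
    congr 1
    field_simp
  have goal1 : b * c = (((1 - α) * ν + α * μ) / (μ + ν)) • c + c * c := by
    rw [h4, hwc]
  have goal2 : c * b = (((1 - α) * μ + α * ν) / (μ + ν)) • c + c * c := by
    rw [h3, hcw]
  refine ⟨goal1, goal2, ?_⟩
  constructor
  · rintro ⟨hA, _⟩
    rw [hA] at goal1
    exact (left_eq_add.mp goal1)
  · intro h0
    rw [h0, add_zero] at goal1 goal2
    exact ⟨goal1, goal2⟩
end

section
/- b₀·b₀ − b₀ = (α − α²)·a − Σ_{(μ,ν)∈S} b_{μ,ν}·b_{μ,ν}. -/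
/-- `b₀·b₀ − b₀ = (α − α²)·a − Σ_{(μ,ν)∈S} b_{μ,ν}·b_{μ,ν}`. -/
theorem stmt_13 {F A : Type*} [Field F] [NonUnitalNonAssocRing A] [Module F A]
    [SMulCommClass F A A] [IsScalarTower F A A]
    (hchar : (2 : F) ≠ 0)
    -- `a` is an idempotent and a weakly primitive `S`-axis:
    (a : A) (ha : a * a = a)
    (S : Finset (F × F)) (hS0 : ((0 : F), (0 : F)) ∉ S) (hS1 : ((1 : F), (1 : F)) ∉ S)
    (hindep : iSupIndep (axisFam F a (Submodule.span F {a}) S))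
    (hsup : (⨆ i, axisFam F a (Submodule.span F {a}) S i) = ⊤)
    (hwp : eigSp F a 1 1 = Submodule.span F {a})
    -- the fusion rules for `a`:
    (fus1 : ∀ p ∈ S, ∀ q ∈ S, p ≠ q →
      ∀ x ∈ eigSp F a p.1 p.2, ∀ y ∈ eigSp F a q.1 q.2, x * y = 0)
    (fus2 : ∀ p ∈ S, ∀ x ∈ eigSp F a p.1 p.2, ∀ y ∈ eigSp F a p.1 p.2,
      x * y ∈ Submodule.span F {a} ⊔ eigSp F a 0 0)
    (fus3 : ∀ x ∈ Submodule.span F {a} ⊔ eigSp F a 0 0,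
      ∀ y ∈ Submodule.span F {a} ⊔ eigSp F a 0 0,
      x * y ∈ Submodule.span F {a} ⊔ eigSp F a 0 0)
    (fus4 : ∀ p ∈ S, ∀ x ∈ Submodule.span F {a} ⊔ eigSp F a 0 0, ∀ y ∈ eigSp F a p.1 p.2,
      x * y ∈ eigSp F a p.1 p.2 ∧ y * x ∈ eigSp F a p.1 p.2)
    -- `b` is an idempotent, decomposed along the eigenspaces of `a`:
    (b : A) (hb : b * b = b)
    (α : F) (b₀ : A) (hb₀ : b₀ ∈ eigSp F a 0 0)
    (bc : F × F → A) (hbc : ∀ p ∈ S, bc p ∈ eigSp F a p.1 p.2)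
    (hbdecomp : b = α • a + b₀ + ∑ p ∈ S, bc p)
    :
    b₀ * b₀ - b₀ = (α - α ^ 2) • a - ∑ p ∈ S, bc p * bc p := by
  classical
  set E : Submodule F A := Submodule.span F {a} ⊔ eigSp F a 0 0 with hE
  have hamem : ∀ s : F, s • a ∈ E := fun s =>
    Submodule.mem_sup_left (Submodule.smul_mem _ s (Submodule.mem_span_singleton_self a))
  have hb₀E : b₀ ∈ E := Submodule.mem_sup_right hb₀
  have hxE : α • a + b₀ ∈ E := E.add_mem (hamem α) hb₀E
  have hab₀ : a * b₀ = 0 := by rw [hb₀.1, zero_smul]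
  have hb₀a : b₀ * a = 0 := by rw [hb₀.2, zero_smul]
  have hax : (α • a) * (α • a) = (α * α) • a := by
    rw [smul_mul_assoc, mul_smul_comm, ha, smul_smul]
  have hax2 : (α • a) * b₀ = 0 := by rw [smul_mul_assoc, hab₀, smul_zero]
  have hax3 : b₀ * (α • a) = 0 := by rw [mul_smul_comm, hb₀a, smul_zero]
  have hcc2 : ∑ p ∈ S, ∑ q ∈ S, bc p * bc q = ∑ p ∈ S, bc p * bc p := by
    refine Finset.sum_congr rfl fun p hp => ?_
    refine Finset.sum_eq_single p (fun q hq hqp => ?_) (fun h => absurd hp h)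
    exact fus1 p hp q hq (Ne.symm hqp) _ (hbc p hp) _ (hbc q hq)
  have hcc3 : ∑ q ∈ S, ∑ p ∈ S, bc p * bc q = ∑ p ∈ S, bc p * bc p := by
    rw [Finset.sum_comm]; exact hcc2
  set X : A := (α ^ 2 - α) • a + (b₀ * b₀ - b₀) + ∑ p ∈ S, bc p * bc p with hX
  set Y : F × F → A := fun p =>
    (α • a + b₀) * bc p + bc p * (α • a + b₀) - bc p with hY
  have key : X + ∑ p ∈ S, Y p =
      (α • a + b₀ + ∑ p ∈ S, bc p) * (α • a + b₀ + ∑ p ∈ S, bc p)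
        - (α • a + b₀ + ∑ p ∈ S, bc p) := by
    simp only [hX, hY, add_mul, mul_add, Finset.sum_mul, Finset.mul_sum, hax, hax2, hax3,
      Finset.sum_add_distrib, Finset.sum_sub_distrib, hcc2, hcc3]
    module
  have heq : X + ∑ p ∈ S, Y p = 0 := by rw [key, ← hbdecomp, hb, sub_self]
  have hXE : X ∈ E := by
    refine E.add_mem (E.add_mem (hamem _) (E.sub_mem (fus3 b₀ hb₀E b₀ hb₀E) hb₀E)) ?_
    exact Submodule.sum_mem _ fun p hp => fus2 p hp _ (hbc p hp) _ (hbc p hp)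
  have hYp : ∀ p ∈ S, Y p ∈ eigSp F a p.1 p.2 := by
    intro p hp
    obtain ⟨h1, h2⟩ := fus4 p hp _ hxE _ (hbc p hp)
    exact Submodule.sub_mem _ (Submodule.add_mem _ h1 h2) (hbc p hp)
  set f := axisFam F a (Submodule.span F {a}) S with hf
  set R : Submodule F A := ⨆ j : {p : F × F // p ∈ S}, eigSp F a j.1.1 j.1.2 with hR
  have hfR : (⨆ j : {p : F × F // p ∈ S}, f (some (some j))) = R := rfl
  have hdisj : Disjoint E R := by
    have h1 : Disjoint (f (some none)) R := by
      have h := hindep.disjoint_biSup (x := some none) (y := Set.range (some ∘ some)) (by simp)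
      refine h.mono_right ?_
      rw [← hfR]
      exact iSup_le fun j => le_iSup₂ (f := fun i (_ : i ∈ Set.range (some ∘ some)) => f i) (some (some j)) ⟨j, rfl⟩
    have h2 : Disjoint (f none) (f (some none) ⊔ R) := by
      have h := hindep.disjoint_biSup (x := none) (y := Set.range some) (by simp)
      refine h.mono_right (sup_le (le_iSup₂ (f := fun i (_ : i ∈ Set.range some) => f i) (some none) ⟨none, rfl⟩) ?_)
      rw [← hfR]
      exact iSup_le fun j => le_iSup₂ (f := fun i (_ : i ∈ Set.range some) => f i) (some (some j)) ⟨some j, rfl⟩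
    exact Disjoint.disjoint_sup_left_of_disjoint_sup_right h1 h2
  have hXR : X ∈ R := by
    have hXeq : X = -∑ p ∈ S, Y p := eq_neg_of_add_eq_zero_left heq
    rw [hXeq]
    exact Submodule.neg_mem _ (Submodule.sum_mem _ fun p hp =>
      Submodule.mem_iSup_of_mem ⟨p, hp⟩ (hYp p hp))
  have hX0 : X = 0 := by
    have := Submodule.disjoint_def.mp hdisj X hXE hXR
    exact this
  have h2 : b₀ * b₀ - b₀ - ((α - α ^ 2) • a - ∑ p ∈ S, bc p * bc p) = X := by
    rw [hX]; module
  rw [← sub_eq_zero]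
  exact h2.trans hX0
end

section
/- Assume b·(x·b) = (b·x)·b for all x ∈ A, that b₀·x = x·b₀ for every x ∈ A₀(a) (A₀(a) is commutative), and that 2α ≠ 1. Then b_{μ,ν}·b_{μ,ν} = 0 for every (μ,ν) ∈ S with μ ≠ ν. -/
open DFinsupp in
lemma aux_indep {R M ι : Type*} [Ring R] [AddCommGroup M] [Module R M]
    [Fintype ι] [DecidableEq ι] {p : ι → Submodule R M} (h : iSupIndep p)
    (f : ι → M) (hf : ∀ i, f i ∈ p i) (hsum : ∑ i, f i = 0) : ∀ i, f i = 0 := by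
  classical
  have hinj := h.dfinsupp_lsum_injective
  set v : Π₀ i, p i := DFinsupp.equivFunOnFintype.symm (fun i => ⟨f i, hf i⟩) with hv
  have : DFinsupp.lsum ℕ (fun i => (p i).subtype) v = 0 := by
    rw [DFinsupp.lsum_apply_apply, DFinsupp.sumAddHom_apply]
    rw [DFinsupp.sum_eq_sum_fintype]
    · exact hsum
    · intro i; rfl
  have hv0 : v = 0 := hinj (by simpa using this)
  intro i
  have h2 : v i = ⟨f i, hf i⟩ := rfl
  rw [hv0] at h2
  exact congrArg Subtype.val h2.symm


section
variable {F A : Type*} [Field F] [NonUnitalNonAssocRing A] [Module F A]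
    [SMulCommClass F A A] [IsScalarTower F A A]

lemma mem_eigSp {a x : A} {μ ν : F} :
    x ∈ eigSp F a μ ν ↔ a * x = μ • x ∧ x * a = ν • x := Iff.rfl

lemma axis_split (a : A) (S : Finset (F × F))
    (hindep : iSupIndep (axisFam F a (Submodule.span F {a}) S))
    (w₁ w₂ : A) (z : {p : F × F // p ∈ S} → A)
    (h1 : w₁ ∈ Submodule.span F {a}) (h2 : w₂ ∈ eigSp F a 0 0)
    (hz : ∀ q, z q ∈ eigSp F a q.1.1 q.1.2)
    (hsum : w₁ + w₂ + ∑ q, z q = 0) :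
    w₁ = 0 ∧ w₂ = 0 ∧ ∀ q, z q = 0 := by
  classical
  set f : Option (Option {p : F × F // p ∈ S}) → A := fun i =>
    match i with
    | none => w₁
    | some none => w₂
    | some (some q) => z q with hf
  have hmem : ∀ i, f i ∈ axisFam F a (Submodule.span F {a}) S i := by
    rintro (_|_|q)
    · exact h1
    · exact h2
    · exact hz q
  have hsum' : ∑ i, f i = 0 := by
    rw [Fintype.sum_option, Fintype.sum_option]
    show w₁ + (w₂ + ∑ q, z q) = 0
    rw [← add_assoc]; exact hsum
  have := aux_indep hindep f hmem hsum'
  exact ⟨this none, this (some none), fun q => this (some (some q))⟩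

lemma axis_splitU (a : A) (S : Finset (F × F))
    (hindep : iSupIndep (axisFam F a (Submodule.span F {a}) S))
    (w : A) (z : {p : F × F // p ∈ S} → A)
    (hw : w ∈ Submodule.span F {a} ⊔ eigSp F a 0 0)
    (hz : ∀ q, z q ∈ eigSp F a q.1.1 q.1.2)
    (hsum : w + ∑ q, z q = 0) :
    w = 0 ∧ ∀ q, z q = 0 := by
  obtain ⟨w₁, h1, w₂, h2, rfl⟩ := Submodule.mem_sup.mp hw
  obtain ⟨e1, e2, e3⟩ := axis_split a S hindep w₁ w₂ z h1 h2 hz hsum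
  exact ⟨by rw [e1, e2, add_zero], e3⟩

end

/-- Assume `b·(x·b) = (b·x)·b` for all `x ∈ A`, that `b₀` commutes with every
element of `A₀(a)`, and that `2α ≠ 1`.  Then `b_{μ,ν}·b_{μ,ν} = 0` for every
`(μ,ν) ∈ S` with `μ ≠ ν`. -/
theorem stmt_15 {F A : Type*} [Field F] [NonUnitalNonAssocRing A] [Module F A]
    [SMulCommClass F A A] [IsScalarTower F A A]
    (hchar : (2 : F) ≠ 0)
    -- `a` is an idempotent and a weakly primitive `S`-axis:
    (a : A) (ha : a * a = a)
    (S : Finset (F × F)) (hS0 : ((0 : F), (0 : F)) ∉ S) (hS1 : ((1 : F), (1 : F)) ∉ S)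
    (hindep : iSupIndep (axisFam F a (Submodule.span F {a}) S))
    (hsup : (⨆ i, axisFam F a (Submodule.span F {a}) S i) = ⊤)
    (hwp : eigSp F a 1 1 = Submodule.span F {a})
    -- the fusion rules for `a`:
    (fus1 : ∀ p ∈ S, ∀ q ∈ S, p ≠ q →
      ∀ x ∈ eigSp F a p.1 p.2, ∀ y ∈ eigSp F a q.1 q.2, x * y = 0)
    (fus2 : ∀ p ∈ S, ∀ x ∈ eigSp F a p.1 p.2, ∀ y ∈ eigSp F a p.1 p.2,
      x * y ∈ Submodule.span F {a} ⊔ eigSp F a 0 0)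
    (fus3 : ∀ x ∈ Submodule.span F {a} ⊔ eigSp F a 0 0,
      ∀ y ∈ Submodule.span F {a} ⊔ eigSp F a 0 0,
      x * y ∈ Submodule.span F {a} ⊔ eigSp F a 0 0)
    (fus4 : ∀ p ∈ S, ∀ x ∈ Submodule.span F {a} ⊔ eigSp F a 0 0, ∀ y ∈ eigSp F a p.1 p.2,
      x * y ∈ eigSp F a p.1 p.2 ∧ y * x ∈ eigSp F a p.1 p.2)
    -- `b` is an idempotent, decomposed along the eigenspaces of `a`:
    (b : A) (hb : b * b = b)
    (α : F) (b₀ : A) (hb₀ : b₀ ∈ eigSp F a 0 0)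
    (bc : F × F → A) (hbc : ∀ p ∈ S, bc p ∈ eigSp F a p.1 p.2)
    (hbdecomp : b = α • a + b₀ + ∑ p ∈ S, bc p)
    (hax : ∀ x : A, b * (x * b) = (b * x) * b)
    (hA0comm : ∀ x ∈ eigSp F a 0 0, b₀ * x = x * b₀)
    (hα : 2 * α ≠ 1) :
    ∀ p ∈ S, p.1 ≠ p.2 → bc p * bc p = 0 := by
  classical
  intro p hp hne
  have ha_mem : a ∈ Submodule.span F {a} := Submodule.mem_span_singleton_self a
  set u := α • a + b₀ with hu_def
  have hu : u ∈ Submodule.span F {a} ⊔ eigSp F a 0 0 :=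
    add_mem (Submodule.mem_sup_left (Submodule.smul_mem _ _ ha_mem))
      (Submodule.mem_sup_right hb₀)
  set B : {q : F × F // q ∈ S} → A := fun q => bc q.1 with hBdef
  have hB : ∀ q, B q ∈ eigSp F a q.1.1 q.1.2 := fun q => hbc q.1 q.2
  have haB : ∀ q, a * B q = q.1.1 • B q := fun q => (mem_eigSp.mp (hB q)).1
  have hBa : ∀ q, B q * a = q.1.2 • B q := fun q => (mem_eigSp.mp (hB q)).2
  have hab₀ : a * b₀ = 0 := by
    have h := (mem_eigSp.mp hb₀).1; rwa [zero_smul] at h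
  have hb₀a : b₀ * a = 0 := by
    have h := (mem_eigSp.mp hb₀).2; rwa [zero_smul] at h
  have hau : a * u = α • a := by
    rw [hu_def, mul_add, mul_smul_comm, ha, hab₀, add_zero]
  have hua : u * a = α • a := by
    rw [hu_def, add_mul, smul_mul_assoc, ha, hb₀a, add_zero]
  have f1 : ∀ (q r : {q : F × F // q ∈ S}), q ≠ r →
      ∀ x ∈ eigSp F a q.1.1 q.1.2, ∀ y ∈ eigSp F a r.1.1 r.1.2, x * y = 0 :=
    fun q r hqr => fus1 q.1 q.2 r.1 r.2 (fun h => hqr (Subtype.ext h))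
  have f2 : ∀ q : {q : F × F // q ∈ S}, ∀ x ∈ eigSp F a q.1.1 q.1.2,
      ∀ y ∈ eigSp F a q.1.1 q.1.2,
      x * y ∈ Submodule.span F {a} ⊔ eigSp F a 0 0 := fun q => fus2 q.1 q.2
  have f4 : ∀ q : {q : F × F // q ∈ S},
      ∀ x ∈ Submodule.span F {a} ⊔ eigSp F a 0 0, ∀ y ∈ eigSp F a q.1.1 q.1.2,
      x * y ∈ eigSp F a q.1.1 q.1.2 ∧ y * x ∈ eigSp F a q.1.1 q.1.2 :=
    fun q => fus4 q.1 q.2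
  have hcommU : ∀ x ∈ Submodule.span F {a} ⊔ eigSp F a 0 0, u * x = x * u := by
    intro x hx
    obtain ⟨x₁, h1, x₀, h0, rfl⟩ := Submodule.mem_sup.mp hx
    obtain ⟨β, rfl⟩ := Submodule.mem_span_singleton.mp h1
    have hax₀ : a * x₀ = 0 := by
      have h := (mem_eigSp.mp h0).1; rwa [zero_smul] at h
    have hx₀a : x₀ * a = 0 := by
      have h := (mem_eigSp.mp h0).2; rwa [zero_smul] at h
    have hbx : b₀ * x₀ = x₀ * b₀ := hA0comm x₀ h0
    rw [hu_def]
    simp only [mul_add, add_mul, smul_mul_assoc, mul_smul_comm, ha, hab₀, hb₀a,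
      hax₀, hx₀a, smul_zero, add_zero, zero_add, hbx, smul_smul]
    rw [mul_comm α β]
  have hbdef : b = u + ∑ q, B q := by
    rw [hbdecomp, ← Finset.sum_coe_sort S bc]
  have hbmul : ∀ x : A, b * x = u * x + ∑ q, B q * x := by
    intro x; rw [hbdef, add_mul, Finset.sum_mul]
  have hmulb : ∀ x : A, x * b = x * u + ∑ q, x * B q := by
    intro x; rw [hbdef, mul_add, Finset.mul_sum]
  have hbmul1 : ∀ (q) (x), x ∈ eigSp F a q.1.1 q.1.2 → b * x = u * x + B q * x := by
    intro q x hx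
    rw [hbmul x]
    congr 1
    exact Finset.sum_eq_single q (fun r _ hr => f1 r q hr (B r) (hB r) x hx)
      (fun h => absurd (Finset.mem_univ q) h)
  have hmul1b : ∀ (q) (x), x ∈ eigSp F a q.1.1 q.1.2 → x * b = x * u + x * B q := by
    intro q x hx
    rw [hmulb x]
    congr 1
    exact Finset.sum_eq_single q (fun r _ hr => f1 q r hr.symm x hx (B r) (hB r))
      (fun h => absurd (Finset.mem_univ q) h)
  -- E1 : u * B q + B q * u - B q = 0
  have hE1 : ∀ q, u * B q + B q * u - B q = 0 := by
    have hbb : b * b = (u * u + ∑ q, u * B q) + ∑ q, (B q * u + B q * B q) := by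
      rw [hbmul b, hmulb u]
      congr 1
      exact Finset.sum_congr rfl (fun q _ => hmul1b q (B q) (hB q))
    have hzero : (u * u - u + ∑ q, B q * B q) +
        ∑ q, (u * B q + B q * u - B q) = 0 := by
      have key : b * b - b = 0 := by rw [hb, sub_self]
      rw [hbb] at key
      rw [hbdef] at key
      simp only [Finset.sum_add_distrib, Finset.sum_sub_distrib] at key ⊢
      rw [← key]
      abel
    exact (axis_splitU a S hindep _ _
      (add_mem (sub_mem (fus3 u hu u hu) hu)
        (Submodule.sum_mem _ (fun q _ => f2 q (B q) (hB q) (B q) (hB q))))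
      (fun q => sub_mem (add_mem (f4 q u hu (B q) (hB q)).1 (f4 q u hu (B q) (hB q)).2)
        (hB q))
      hzero).2
  -- E3
  have hab' : a * b = α • a + ∑ q, q.1.1 • B q := by
    rw [hmulb a, hau]
    congr 1
    exact Finset.sum_congr rfl fun q _ => haB q
  have hba' : b * a = α • a + ∑ q, q.1.2 • B q := by
    rw [hbmul a, hua]
    congr 1
    exact Finset.sum_congr rfl fun q _ => hBa q
  have hbBq : ∀ q, b * B q = u * B q + B q * B q := fun q => hbmul1 q (B q) (hB q)
  have hBqb : ∀ q, B q * b = B q * u + B q * B q := fun q => hmul1b q (B q) (hB q)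
  have hE3 : ∀ q, (α * q.1.2 - α * q.1.1) • B q +
      (q.1.1 • (u * B q) - q.1.2 • (B q * u)) = 0 := by
    have hL : b * (a * b) = α • (b * a) + ∑ q, q.1.1 • (b * B q) := by
      rw [hab', mul_add, Finset.mul_sum, mul_smul_comm]
      congr 1
      exact Finset.sum_congr rfl fun q _ => mul_smul_comm _ _ _
    have hR : (b * a) * b = α • (a * b) + ∑ q, q.1.2 • (B q * b) := by
      rw [hba', add_mul, Finset.sum_mul, smul_mul_assoc]
      congr 1
      exact Finset.sum_congr rfl fun q _ => smul_mul_assoc _ _ _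
    have hzero : (∑ q, (q.1.1 • (B q * B q) - q.1.2 • (B q * B q))) +
        ∑ q, ((α * q.1.2 - α * q.1.1) • B q +
          (q.1.1 • (u * B q) - q.1.2 • (B q * u))) = 0 := by
      have key : b * (a * b) - (b * a) * b = 0 := by rw [hax a, sub_self]
      rw [hL, hR, hba', hab'] at key
      simp only [hbBq, hBqb, smul_add, smul_smul, Finset.smul_sum,
        Finset.sum_add_distrib] at key
      rw [← key]
      simp only [sub_smul, Finset.sum_sub_distrib, Finset.sum_add_distrib]
      abel
    exact (axis_splitU a S hindep _ _
      (Submodule.sum_mem _ (fun q _ => sub_mem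
        (Submodule.smul_mem _ _ (f2 q (B q) (hB q) (B q) (hB q)))
        (Submodule.smul_mem _ _ (f2 q (B q) (hB q) (B q) (hB q)))))
      (fun q => add_mem (Submodule.smul_mem _ _ (hB q))
        (sub_mem (Submodule.smul_mem _ _ (f4 q u hu (B q) (hB q)).1)
          (Submodule.smul_mem _ _ (f4 q u hu (B q) (hB q)).2)))
      hzero).2
  -- E5 at p
  set P : {q : F × F // q ∈ S} := ⟨p, hp⟩ with hPdef
  have hsmem : u * B P ∈ eigSp F a P.1.1 P.1.2 := (f4 P u hu (B P) (hB P)).1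
  have hs'mem : B P * u ∈ eigSp F a P.1.1 P.1.2 := (f4 P u hu (B P) (hB P)).2
  have htU : B P * B P ∈ Submodule.span F {a} ⊔ eigSp F a 0 0 :=
    f2 P (B P) (hB P) (B P) (hB P)
  have hE5 : B P * (B P * u) = (u * B P) * B P := by
    have hLp : b * (B P * b) = (u * (B P * u) + B P * (B P * u)) +
        (u * (B P * B P) + ∑ r, B r * (B P * B P)) := by
      rw [hmul1b P (B P) (hB P), mul_add]
      congr 1
      · exact hbmul1 P (B P * u) hs'mem
      · exact hbmul (B P * B P)
    have hRp : (b * B P) * b = ((u * B P) * u + (u * B P) * B P) +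
        ((B P * B P) * u + ∑ r, (B P * B P) * B r) := by
      rw [hbmul1 P (B P) (hB P), add_mul]
      congr 1
      · exact hmul1b P (u * B P) hsmem
      · exact hmulb (B P * B P)
    have hzero : ((B P * (B P * u) + u * (B P * B P)) -
          ((u * B P) * B P + (B P * B P) * u)) +
        ∑ r, ((B r * (B P * B P) - (B P * B P) * B r) +
          (if r = P then u * (B P * u) - (u * B P) * u else 0)) = 0 := by
      have key : b * (B P * b) - (b * B P) * b = 0 := by rw [hax (B P), sub_self]
      rw [hLp, hRp] at key
      rw [Finset.sum_add_distrib, Finset.sum_sub_distrib,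
        Finset.sum_ite_eq' Finset.univ P
          (fun _ => u * (B P * u) - (u * B P) * u)]
      simp only [Finset.mem_univ, if_pos]
      rw [← key]
      abel
    have hw := (axis_splitU a S hindep _ _
      (sub_mem (add_mem (f2 P (B P) (hB P) (B P * u) hs'mem) (fus3 u hu _ htU))
        (add_mem (f2 P (u * B P) hsmem (B P) (hB P)) (fus3 _ htU u hu)))
      (fun r => add_mem
        (sub_mem (f4 r _ htU (B r) (hB r)).2 (f4 r _ htU (B r) (hB r)).1)
        (by
          rcases eq_or_ne r P with rfl | hr
          · simp only [if_pos rfl]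
            exact sub_mem (f4 P u hu (B P * u) hs'mem).1 (f4 P u hu (u * B P) hsmem).2
          · simp only [if_neg hr]
            exact zero_mem _))
      hzero).1
    have hcomm : u * (B P * B P) = (B P * B P) * u := hcommU _ htU
    have h2 : B P * (B P * u) + u * (B P * B P) =
        (u * B P) * B P + (B P * B P) * u := sub_eq_zero.mp hw
    rw [hcomm] at h2
    exact add_right_cancel h2
  -- final assembly
  have e1 := hE1 P
  have e3 := hE3 P
  have hμν1 : (P.1.1 : F) = p.1 := rfl
  have hμν2 : (P.1.2 : F) = p.2 := rfl
  have hs : (p.1 + p.2) • (u * B P) = (p.2 + α * p.1 - α * p.2) • B P := by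
    rw [hμν1, hμν2] at e3
    linear_combination (norm := module) (p.2 : F) • e1 + e3
  have hs' : (p.1 + p.2) • (B P * u) = (p.1 + α * p.2 - α * p.1) • B P := by
    linear_combination (norm := module) (p.1 : F) • e1 - e3
  have hct : (p.2 + α * p.1 - α * p.2) • (B P * B P) =
      (p.1 + p.2) • ((u * B P) * B P) := by
    rw [← smul_mul_assoc, ← hs, smul_mul_assoc]
  have hdt : (p.1 + α * p.2 - α * p.1) • (B P * B P) =
      (p.1 + p.2) • (B P * (B P * u)) := by
    rw [← mul_smul_comm, ← hs', mul_smul_comm]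
  have h0 : ((p.2 + α * p.1 - α * p.2) - (p.1 + α * p.2 - α * p.1)) • (B P * B P) = 0 := by
    rw [sub_smul, hct, hdt, hE5, sub_self]
  have hcoef : (p.2 + α * p.1 - α * p.2) - (p.1 + α * p.2 - α * p.1) =
      (p.2 - p.1) * (1 - 2 * α) := by ring
  rw [hcoef] at h0
  rcases smul_eq_zero.mp h0 with h | h
  · exact absurd h (mul_ne_zero (sub_ne_zero.mpr (Ne.symm hne))
      (sub_ne_zero.mpr (Ne.symm hα)))
  · exact h
end

section
/- Assume (b·a)·b = b·(a·b). Let y = Σ_{(μ,ν)∈S} c_{μ,ν}·b_{μ,ν} (with c_{μ,ν} ∈ F) be nonzero and satisfy b·y = ρ·y and y·b = ξ·y for scalars ρ, ξ ∈ F. Then: (1) ρ + ξ = 1; (2) Σ_{(μ,ν)∈S} c_{μ,ν}·(b_{μ,ν}·b_{μ,ν}) = 0; and (3) for every (μ,ν) ∈ S with c_{μ,ν}·b_{μ,ν} ≠ 0, one has (μ + ν)·ρ = (1 − α)ν + αμ and (μ + ν)·ξ = (1 − α)μ + αν. -/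
private lemma indep_comp_zero' {R N ι : Type*} [Ring R] [AddCommGroup N] [Module R N]
    [Fintype ι] {p : ι → Submodule R N} (h : iSupIndep p)
    (f : ι → N) (hf : ∀ i, f i ∈ p i) (hsum : ∑ i, f i = 0) (i : ι) : f i = 0 := by
  classical
  have hd : Disjoint (p i) (⨆ j ≠ i, p j) := h i
  have heq : f i = -∑ j ∈ Finset.univ.erase i, f j := by
    have h2 := Finset.add_sum_erase Finset.univ f (Finset.mem_univ i)
    rw [hsum] at h2
    exact eq_neg_of_add_eq_zero_left h2
  have h1 : f i ∈ ⨆ j ≠ i, p j := by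
    rw [heq]
    exact neg_mem (Submodule.sum_mem _ fun j hj =>
      Submodule.mem_iSup_of_mem j (Submodule.mem_iSup_of_mem (Finset.mem_erase.mp hj).1 (hf j)))
  exact Submodule.disjoint_def.mp hd _ (hf i) h1

/-- Assume `(b·a)·b = b·(a·b)`.  Let `y = Σ_{(μ,ν)∈S} c_{μ,ν}·b_{μ,ν}` be
nonzero with `b·y = ρ·y` and `y·b = ξ·y`.  Then: (1) `ρ + ξ = 1`;
(2) `Σ_{(μ,ν)∈S} c_{μ,ν}·b_{μ,ν}² = 0`; and (3) for every `(μ,ν) ∈ S` with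
`c_{μ,ν}·b_{μ,ν} ≠ 0`, one has `(μ + ν)·ρ = (1 − α)ν + αμ` and
`(μ + ν)·ξ = (1 − α)μ + αν`. -/
theorem stmt_17 {F A : Type*} [Field F] [NonUnitalNonAssocRing A] [Module F A]
    [SMulCommClass F A A] [IsScalarTower F A A]
    (hchar : (2 : F) ≠ 0)
    -- `a` is an idempotent and a weakly primitive `S`-axis:
    (a : A) (ha : a * a = a)
    (S : Finset (F × F)) (hS0 : ((0 : F), (0 : F)) ∉ S) (hS1 : ((1 : F), (1 : F)) ∉ S)
    (hindep : iSupIndep (axisFam F a (Submodule.span F {a}) S))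
    (hsup : (⨆ i, axisFam F a (Submodule.span F {a}) S i) = ⊤)
    (hwp : eigSp F a 1 1 = Submodule.span F {a})
    -- the fusion rules for `a`:
    (fus1 : ∀ p ∈ S, ∀ q ∈ S, p ≠ q →
      ∀ x ∈ eigSp F a p.1 p.2, ∀ y ∈ eigSp F a q.1 q.2, x * y = 0)
    (fus2 : ∀ p ∈ S, ∀ x ∈ eigSp F a p.1 p.2, ∀ y ∈ eigSp F a p.1 p.2,
      x * y ∈ Submodule.span F {a} ⊔ eigSp F a 0 0)
    (fus3 : ∀ x ∈ Submodule.span F {a} ⊔ eigSp F a 0 0,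
      ∀ y ∈ Submodule.span F {a} ⊔ eigSp F a 0 0,
      x * y ∈ Submodule.span F {a} ⊔ eigSp F a 0 0)
    (fus4 : ∀ p ∈ S, ∀ x ∈ Submodule.span F {a} ⊔ eigSp F a 0 0, ∀ y ∈ eigSp F a p.1 p.2,
      x * y ∈ eigSp F a p.1 p.2 ∧ y * x ∈ eigSp F a p.1 p.2)
    -- `b` is an idempotent, decomposed along the eigenspaces of `a`:
    (b : A) (hb : b * b = b)
    (α : F) (b₀ : A) (hb₀ : b₀ ∈ eigSp F a 0 0)
    (bc : F × F → A) (hbc : ∀ p ∈ S, bc p ∈ eigSp F a p.1 p.2)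
    (hbdecomp : b = α • a + b₀ + ∑ p ∈ S, bc p)
    (hcomm : (b * a) * b = b * (a * b))
    (cc : F × F → F) (y : A)
    (hy : y = ∑ p ∈ S, cc p • bc p) (hyne : y ≠ 0)
    (ρ ξ : F) (hby : b * y = ρ • y) (hyb : y * b = ξ • y) :
    ρ + ξ = 1 ∧
    (∑ p ∈ S, cc p • (bc p * bc p)) = 0 ∧
    ∀ p ∈ S, cc p • bc p ≠ 0 →
      (p.1 + p.2) * ρ = (1 - α) * p.2 + α * p.1 ∧
      (p.1 + p.2) * ξ = (1 - α) * p.1 + α * p.2 := by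
  classical
  -- eigenspace membership unfolding
  have eig1 : ∀ (μ ν : F) (x : A), x ∈ eigSp F a μ ν → a * x = μ • x := fun _ _ _ h => h.1
  have eig2 : ∀ (μ ν : F) (x : A), x ∈ eigSp F a μ ν → x * a = ν • x := fun _ _ _ h => h.2
  have haE : a ∈ Submodule.span F {a} := Submodule.mem_span_singleton_self a
  obtain ⟨B, hB⟩ : ∃ B : A, B = α • a + b₀ := ⟨_, rfl⟩
  have hbd : b = B + ∑ p ∈ S, bc p := by rw [hB]; exact hbdecomp
  have hBmem : B ∈ Submodule.span F {a} ⊔ eigSp F a 0 0 := by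
    rw [hB]
    exact Submodule.add_mem _ (Submodule.mem_sup_left (Submodule.smul_mem _ _ haE))
      (Submodule.mem_sup_right hb₀)
  -- the key direct-sum splitting principle
  have key : ∀ g : Option (Option {p : F × F // p ∈ S}) → A,
      (∀ i, g i ∈ axisFam F a (Submodule.span F {a}) S i) → (∑ i, g i) = 0 → ∀ i, g i = 0 :=
    fun g hg hsum i => indep_comp_zero' hindep g hg hsum i
  have split : ∀ (u v : A) (w : F × F → A), u ∈ Submodule.span F {a} → v ∈ eigSp F a 0 0 →
      (∀ p ∈ S, w p ∈ eigSp F a p.1 p.2) → u + v + ∑ p ∈ S, w p = 0 →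
      u = 0 ∧ v = 0 ∧ ∀ p ∈ S, w p = 0 := by
    intro u v w hu hv hw hsum
    set g : Option (Option {p : F × F // p ∈ S}) → A := fun i => match i with
      | none => u | some none => v | some (some q) => w q.1 with hg
    have hmem : ∀ i, g i ∈ axisFam F a (Submodule.span F {a}) S i := by
      rintro (_ | _ | q)
      · exact hu
      · exact hv
      · exact hw q.1 q.2
    have hsg : ∑ i, g i = 0 := by
      rw [Fintype.sum_option, Fintype.sum_option]
      have h1 : ∑ q : {p : F × F // p ∈ S}, w q.1 = ∑ p ∈ S, w p := Finset.sum_coe_sort S w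
      show u + (v + ∑ q : {p : F × F // p ∈ S}, w q.1) = 0
      rw [h1, ← add_assoc, hsum]
    refine ⟨key g hmem hsg none, key g hmem hsg (some none), fun p hp => ?_⟩
    exact key g hmem hsg (some (some ⟨p, hp⟩))
  have split2 : ∀ (u : A) (w : F × F → A), u ∈ Submodule.span F {a} ⊔ eigSp F a 0 0 →
      (∀ p ∈ S, w p ∈ eigSp F a p.1 p.2) → u + ∑ p ∈ S, w p = 0 →
      u = 0 ∧ ∀ p ∈ S, w p = 0 := by
    intro u w hu hw hsum
    obtain ⟨u1, hu1, u2, hu2, rfl⟩ := Submodule.mem_sup.mp hu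
    obtain ⟨h1, h2, h3⟩ := split u1 u2 w hu1 hu2 hw hsum
    exact ⟨by rw [h1, h2, add_zero], h3⟩
  -- basic multiplicative facts
  have hcross : ∀ p ∈ S, ∀ q ∈ S, p ≠ q → bc p * bc q = 0 :=
    fun p hp q hq hne => fus1 p hp q hq hne _ (hbc p hp) _ (hbc q hq)
  have hsq : ∀ p ∈ S, bc p * bc p ∈ Submodule.span F {a} ⊔ eigSp F a 0 0 :=
    fun p hp => fus2 p hp _ (hbc p hp) _ (hbc p hp)
  have hBb : ∀ p ∈ S, B * bc p ∈ eigSp F a p.1 p.2 :=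
    fun p hp => (fus4 p hp _ hBmem _ (hbc p hp)).1
  have hbB : ∀ p ∈ S, bc p * B ∈ eigSp F a p.1 p.2 :=
    fun p hp => (fus4 p hp _ hBmem _ (hbc p hp)).2
  -- sum product computations
  have hprod : ∀ d e : F × F → F, (∑ p ∈ S, d p • bc p) * (∑ p ∈ S, e p • bc p)
      = ∑ p ∈ S, (d p * e p) • (bc p * bc p) := by
    intro d e
    rw [Finset.sum_mul_sum]
    refine Finset.sum_congr rfl fun p hp => ?_
    rw [Finset.sum_eq_single_of_mem p hp]
    · rw [smul_mul_assoc, mul_smul_comm, smul_smul]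
    · intro q hq hne
      rw [smul_mul_assoc, mul_smul_comm, hcross p hp q hq hne.symm, smul_zero, smul_zero]
  have hz_y : (∑ p ∈ S, bc p) * (∑ p ∈ S, cc p • bc p) = ∑ p ∈ S, cc p • (bc p * bc p) := by
    have h := hprod (fun _ => 1) cc
    simpa using h
  have hy_z : (∑ p ∈ S, cc p • bc p) * (∑ p ∈ S, bc p) = ∑ p ∈ S, cc p • (bc p * bc p) := by
    have h := hprod cc (fun _ => 1)
    simpa using h
  have hz_z : (∑ p ∈ S, bc p) * (∑ p ∈ S, bc p) = ∑ p ∈ S, bc p * bc p := by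
    have h := hprod (fun _ => 1) (fun _ => 1)
    simpa using h
  have hB_y : B * (∑ p ∈ S, cc p • bc p) = ∑ p ∈ S, cc p • (B * bc p) := by
    rw [Finset.mul_sum]
    exact Finset.sum_congr rfl fun p _ => mul_smul_comm _ _ _
  have hy_B : (∑ p ∈ S, cc p • bc p) * B = ∑ p ∈ S, cc p • (bc p * B) := by
    rw [Finset.sum_mul]
    exact Finset.sum_congr rfl fun p _ => smul_mul_assoc _ _ _
  have hzbc : ∀ p ∈ S, (∑ q ∈ S, bc q) * bc p = bc p * bc p := by
    intro p hp
    rw [Finset.sum_mul, Finset.sum_eq_single_of_mem p hp]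
    intro q hq hne
    exact hcross q hq p hp hne
  have hbcz : ∀ p ∈ S, bc p * (∑ q ∈ S, bc q) = bc p * bc p := by
    intro p hp
    rw [Finset.mul_sum, Finset.sum_eq_single_of_mem p hp]
    intro q hq hne
    exact hcross p hp q hq hne.symm
  -- equation from b * y = ρ • y
  have Eρ : (∑ p ∈ S, cc p • (bc p * bc p)) = 0 ∧
      ∀ p ∈ S, cc p • (B * bc p) - (ρ * cc p) • bc p = 0 := by
    apply split2
    · exact Submodule.sum_mem _ fun p hp => Submodule.smul_mem _ _ (hsq p hp)
    · intro p hp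
      exact Submodule.sub_mem _ (Submodule.smul_mem _ _ (hBb p hp))
        (Submodule.smul_mem _ _ (hbc p hp))
    · have h := hby
      rw [hbd, hy, add_mul, hz_y, hB_y, Finset.smul_sum] at h
      rw [Finset.sum_sub_distrib]
      have hrhs : ∑ p ∈ S, (ρ * cc p) • bc p = ∑ p ∈ S, ρ • cc p • bc p :=
        Finset.sum_congr rfl fun p _ => (smul_smul _ _ _).symm
      rw [hrhs, ← h]
      abel
  have EB1 : ∀ p ∈ S, cc p • (B * bc p) = (ρ * cc p) • bc p :=
    fun p hp => sub_eq_zero.mp (Eρ.2 p hp)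
  -- equation from y * b = ξ • y
  have Eξ : ∀ p ∈ S, cc p • (bc p * B) = (ξ * cc p) • bc p := by
    have h2 : (∑ p ∈ S, cc p • (bc p * bc p)) = 0 ∧
        ∀ p ∈ S, cc p • (bc p * B) - (ξ * cc p) • bc p = 0 := by
      apply split2
      · exact Submodule.sum_mem _ fun p hp => Submodule.smul_mem _ _ (hsq p hp)
      · intro p hp
        exact Submodule.sub_mem _ (Submodule.smul_mem _ _ (hbB p hp))
          (Submodule.smul_mem _ _ (hbc p hp))
      · have h := hyb
        rw [hbd, hy, mul_add, hy_z, hy_B, Finset.smul_sum] at h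
        rw [Finset.sum_sub_distrib]
        have hrhs : ∑ p ∈ S, (ξ * cc p) • bc p = ∑ p ∈ S, ξ • cc p • bc p :=
          Finset.sum_congr rfl fun p _ => (smul_smul _ _ _).symm
        rw [hrhs, ← h]
        abel
    exact fun p hp => sub_eq_zero.mp (h2.2 p hp)
  -- equation from b * b = b
  have EID : ∀ p ∈ S, B * bc p + bc p * B = bc p := by
    have h3 : (B * B - B + ∑ p ∈ S, bc p * bc p) = 0 ∧
        ∀ p ∈ S, B * bc p + bc p * B - bc p = 0 := by
      apply split2
      · refine Submodule.add_mem _ (Submodule.sub_mem _ ?_ hBmem)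
          (Submodule.sum_mem _ fun p hp => hsq p hp)
        exact fus3 _ hBmem _ hBmem
      · intro p hp
        exact Submodule.sub_mem _ (Submodule.add_mem _ (hBb p hp) (hbB p hp)) (hbc p hp)
      · have h := hb
        rw [hbd, add_mul, mul_add, mul_add, hz_z, Finset.mul_sum, Finset.sum_mul] at h
        rw [Finset.sum_sub_distrib, Finset.sum_add_distrib]
        rw [← sub_eq_zero] at h
        rw [← h]
        abel
    intro p hp
    have h4 := h3.2 p hp
    rw [sub_eq_zero] at h4
    exact h4
  -- compute a*b and b*a
  have hab : a * b = α • a + ∑ p ∈ S, p.1 • bc p := by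
    rw [hbdecomp, mul_add, mul_add, mul_smul_comm, ha, eig1 0 0 b₀ hb₀, zero_smul, add_zero,
      Finset.mul_sum]
    congr 1
    exact Finset.sum_congr rfl fun p hp => eig1 p.1 p.2 (bc p) (hbc p hp)
  have hba : b * a = α • a + ∑ p ∈ S, p.2 • bc p := by
    rw [hbdecomp, add_mul, add_mul, smul_mul_assoc, ha, eig2 0 0 b₀ hb₀, zero_smul, add_zero,
      Finset.sum_mul]
    congr 1
    exact Finset.sum_congr rfl fun p hp => eig2 p.1 p.2 (bc p) (hbc p hp)
  -- equation from (b*a)*b = b*(a*b)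
  have ECM : ∀ p ∈ S, (α * p.1) • bc p - (α * p.2) • bc p
      + p.2 • (bc p * B) - p.1 • (B * bc p) = 0 := by
    have h4 : (∑ p ∈ S, (p.2 - p.1) • (bc p * bc p)) = 0 ∧
        ∀ p ∈ S, ((α * p.1) • bc p - (α * p.2) • bc p
          + p.2 • (bc p * B) - p.1 • (B * bc p)) = 0 := by
      apply split2
      · exact Submodule.sum_mem _ fun p hp => Submodule.smul_mem _ _ (hsq p hp)
      · intro p hp
        refine Submodule.sub_mem _ (Submodule.add_mem _ (Submodule.sub_mem _ ?_ ?_) ?_) ?_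
        · exact Submodule.smul_mem _ _ (hbc p hp)
        · exact Submodule.smul_mem _ _ (hbc p hp)
        · exact Submodule.smul_mem _ _ (hbB p hp)
        · exact Submodule.smul_mem _ _ (hBb p hp)
      · have h := hcomm
        have hL : (b * a) * b = α • (α • a) + ∑ p ∈ S, (α * p.1) • bc p
            + (∑ p ∈ S, p.2 • (bc p * B) + ∑ p ∈ S, p.2 • (bc p * bc p)) := by
          rw [hba, add_mul, smul_mul_assoc, hab, smul_add, Finset.sum_mul]
          congr 1
          · congr 1
            rw [Finset.smul_sum]
            exact Finset.sum_congr rfl fun p _ => smul_smul _ _ _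
          · rw [← Finset.sum_add_distrib]
            refine Finset.sum_congr rfl fun p hp => ?_
            rw [smul_mul_assoc, hbd, mul_add, hbcz p hp, smul_add]
        have hR : b * (a * b) = α • (α • a) + ∑ p ∈ S, (α * p.2) • bc p
            + (∑ p ∈ S, p.1 • (B * bc p) + ∑ p ∈ S, p.1 • (bc p * bc p)) := by
          rw [hab, mul_add, mul_smul_comm, hba, smul_add, Finset.mul_sum]
          congr 1
          · congr 1
            rw [Finset.smul_sum]
            exact Finset.sum_congr rfl fun p _ => smul_smul _ _ _
          · rw [← Finset.sum_add_distrib]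
            refine Finset.sum_congr rfl fun p hp => ?_
            rw [mul_smul_comm, hbd, add_mul, hzbc p hp, smul_add]
        rw [hL, hR, ← sub_eq_zero] at h
        rw [← h]
        have hd1 : ∑ p ∈ S, (p.2 - p.1) • (bc p * bc p)
            = ∑ p ∈ S, p.2 • (bc p * bc p) - ∑ p ∈ S, p.1 • (bc p * bc p) := by
          rw [← Finset.sum_sub_distrib]
          exact Finset.sum_congr rfl fun p _ => sub_smul _ _ _
        rw [hd1, Finset.sum_sub_distrib, Finset.sum_add_distrib, Finset.sum_sub_distrib]
        abel
    exact h4.2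
  -- y nonzero gives a nonzero component
  obtain ⟨p0, hp0, hv0⟩ : ∃ p ∈ S, cc p • bc p ≠ 0 := by
    by_contra hcon
    push_neg at hcon
    exact hyne (hy.trans (Finset.sum_eq_zero hcon))
  -- (1): ρ + ξ = 1
  have h1 : ρ + ξ = 1 := by
    have e := congrArg (fun t => cc p0 • t) (EID p0 hp0)
    simp only [smul_add] at e
    rw [EB1 p0 hp0, Eξ p0 hp0] at e
    have e2 : (ρ + ξ - 1) • (cc p0 • bc p0) = 0 := by
      have e3 : (ρ + ξ - 1) • (cc p0 • bc p0)
          = (ρ * cc p0) • bc p0 + (ξ * cc p0) • bc p0 - cc p0 • bc p0 := by module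
      rw [e3, e, sub_self]
    rcases smul_eq_zero.mp e2 with h | h
    · linear_combination h
    · exact absurd h hv0
  refine ⟨h1, Eρ.1, ?_⟩
  -- (3): eigenvalue relations
  intro p hp hv
  have e := congrArg (fun t => cc p • t) (ECM p hp)
  simp only [smul_sub, smul_add, smul_zero] at e
  have e1 : (cc p * (α * p.1)) • bc p - (cc p * (α * p.2)) • bc p
      + p.2 • (cc p • (bc p * B)) - p.1 • (cc p • (B * bc p)) = 0 := by
    have heq : (cc p * (α * p.1)) • bc p - (cc p * (α * p.2)) • bc p
        + p.2 • (cc p • (bc p * B)) - p.1 • (cc p • (B * bc p))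
        = cc p • ((α * p.1) • bc p) - cc p • ((α * p.2) • bc p)
        + cc p • (p.2 • (bc p * B)) - cc p • (p.1 • (B * bc p)) := by module
    rw [heq]
    exact e
  rw [EB1 p hp, Eξ p hp] at e1
  have e2 : (cc p * (α * p.1) - cc p * (α * p.2) + p.2 * (ξ * cc p) - p.1 * (ρ * cc p))
      • bc p = 0 := by
    have heq : (cc p * (α * p.1) - cc p * (α * p.2) + p.2 * (ξ * cc p) - p.1 * (ρ * cc p))
        • bc p
        = (cc p * (α * p.1)) • bc p - (cc p * (α * p.2)) • bc p
          + p.2 • ((ξ * cc p) • bc p) - p.1 • ((ρ * cc p) • bc p) := by module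
    rw [heq]
    exact e1
  have hbcne : bc p ≠ 0 := fun h => hv (by rw [h, smul_zero])
  have hccne : cc p ≠ 0 := fun h => hv (by rw [h, zero_smul])
  have hsc : cc p * (α * p.1) - cc p * (α * p.2) + p.2 * (ξ * cc p) - p.1 * (ρ * cc p) = 0 := by
    rcases smul_eq_zero.mp e2 with h | h
    · exact h
    · exact absurd h hbcne
  have h5 : α * p.1 - α * p.2 + p.2 * ξ - p.1 * ρ = 0 := by
    have hfac : cc p * (α * p.1 - α * p.2 + p.2 * ξ - p.1 * ρ) = 0 := by
      linear_combination hsc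
    rcases mul_eq_zero.mp hfac with h | h
    · exact absurd h hccne
    · exact h
  constructor
  · linear_combination p.2 * h1 - h5
  · linear_combination p.1 * h1 + h5
end
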